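/- arXiv:2410.06869 — 8 statements merged into one kernel-verified Lean document; each statement's English description precedes it below -/
import Mathlib

section
/- Let T₁ be a densely defined closed operator on a complex Hilbert space H₁ and T₂ a densely defined closed operator on a complex Hilbert space H₂. Define their direct sum T₁ ⊕ T₂ on the domain D(T₁) × D(T₂) ⊆ H₁ × H₂ by (x, y) ↦ (T₁x, T₂y). Then T₁ and T₂ are both EP if and only if T₁ ⊕ T₂ is EP. -/
open LinearPMap

variable {H₁ H₂ : Type*} [NormedAddCommGroup H₁] [InnerProductSpace ℂ H₁] [CompleteSpace H₁]
  [NormedAddCommGroup H₂] [InnerProductSpace ℂ H₂] [CompleteSpace H₂]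

/-- The range of a densely defined (partial) operator, as a submodule. -/
noncomputable def pmRange {H : Type*} [NormedAddCommGroup H] [InnerProductSpace ℂ H]
    (T : H →ₗ.[ℂ] H) : Submodule ℂ H := LinearMap.range T.toFun

/-- A densely defined closed operator is EP if its range is closed and coincides with the
range of its adjoint. -/
def IsEP {H : Type*} [NormedAddCommGroup H] [InnerProductSpace ℂ H] [CompleteSpace H]
    (T : H →ₗ.[ℂ] H) : Prop :=
  IsClosed ((pmRange T : Submodule ℂ H) : Set H) ∧ pmRange T = pmRange T.adjoint

/-- The direct sum `T₁ ⊕ T₂` of two partial operators, defined on `D(T₁) × D(T₂)` inside the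
product Hilbert space `H₁ × H₂` (realized as `WithLp 2 (H₁ × H₂)`) by `(x, y) ↦ (T₁ x, T₂ y)`. -/
noncomputable def pmProd (T₁ : H₁ →ₗ.[ℂ] H₁) (T₂ : H₂ →ₗ.[ℂ] H₂) :
    (WithLp 2 (H₁ × H₂)) →ₗ.[ℂ] (WithLp 2 (H₁ × H₂)) where
  domain := (T₁.domain.prod T₂.domain : Submodule ℂ (H₁ × H₂)).comap
    (WithLp.linearEquiv 2 ℂ (H₁ × H₂)).toLinearMap
  toFun :=
    { toFun := fun x => WithLp.toLp 2 (T₁ ⟨x.1.ofLp.1, x.2.1⟩, T₂ ⟨x.1.ofLp.2, x.2.2⟩)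
      map_add' := fun x y => WithLp.ofLp_injective 2 <|
        Prod.ext (T₁.map_add ⟨x.1.ofLp.1, x.2.1⟩ ⟨y.1.ofLp.1, y.2.1⟩)
          (T₂.map_add ⟨x.1.ofLp.2, x.2.2⟩ ⟨y.1.ofLp.2, y.2.2⟩)
      map_smul' := fun c x => WithLp.ofLp_injective 2 <|
        Prod.ext (T₁.map_smul c ⟨x.1.ofLp.1, x.2.1⟩) (T₂.map_smul c ⟨x.1.ofLp.2, x.2.2⟩) }

set_option linter.unusedSectionVars false

variable (T₁ : H₁ →ₗ.[ℂ] H₁) (T₂ : H₂ →ₗ.[ℂ] H₂)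

lemma pmRange_prod (z : WithLp 2 (H₁ × H₂)) :
    z ∈ pmRange (pmProd T₁ T₂) ↔ z.ofLp.1 ∈ pmRange T₁ ∧ z.ofLp.2 ∈ pmRange T₂ := by
  constructor
  · rintro ⟨x, rfl⟩
    exact ⟨⟨⟨x.1.ofLp.1, x.2.1⟩, rfl⟩, ⟨⟨x.1.ofLp.2, x.2.2⟩, rfl⟩⟩
  · rintro ⟨⟨x₁, h₁⟩, ⟨x₂, h₂⟩⟩
    exact ⟨⟨WithLp.toLp 2 (x₁, x₂), ⟨x₁.2, x₂.2⟩⟩, WithLp.ofLp_injective 2 (Prod.ext h₁ h₂)⟩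

lemma dense_pmProd_domain (hd₁ : Dense (T₁.domain : Set H₁)) (hd₂ : Dense (T₂.domain : Set H₂)) :
    Dense ((pmProd T₁ T₂).domain : Set (WithLp 2 (H₁ × H₂))) := by
  have h : Dense ((T₁.domain : Set H₁) ×ˢ (T₂.domain : Set H₂)) := hd₁.prod hd₂
  have := h.preimage (WithLp.prodContinuousLinearEquiv 2 ℂ H₁ H₂).toHomeomorph.isOpenMap
  exact this

local notation "⟪" x ", " y "⟫" => @inner ℂ _ _ x y

lemma pmProd_isFormalAdjoint (hd₁ : Dense (T₁.domain : Set H₁))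
    (hd₂ : Dense (T₂.domain : Set H₂)) :
    (pmProd T₁.adjoint T₂.adjoint).IsFormalAdjoint (pmProd T₁ T₂) := by
  intro x y
  have e₁ := adjoint_isFormalAdjoint hd₁ (⟨x.1.ofLp.1, x.2.1⟩ : T₁.adjoint.domain)
    (⟨y.1.ofLp.1, y.2.1⟩ : T₁.domain)
  have e₂ := adjoint_isFormalAdjoint hd₂ (⟨x.1.ofLp.2, x.2.2⟩ : T₂.adjoint.domain)
    (⟨y.1.ofLp.2, y.2.2⟩ : T₂.domain)
  show ⟪(pmProd T₁.adjoint T₂.adjoint x : WithLp 2 (H₁ × H₂)), (y : WithLp 2 (H₁ × H₂))⟫ = _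
  simp only [WithLp.prod_inner_apply]
  exact congrArg₂ (· + ·) e₁ e₂

lemma adjoint_pmProd (hd₁ : Dense (T₁.domain : Set H₁)) (hd₂ : Dense (T₂.domain : Set H₂)) :
    (pmProd T₁ T₂).adjoint = pmProd T₁.adjoint T₂.adjoint := by
  have hdp := dense_pmProd_domain T₁ T₂ hd₁ hd₂
  have le1 : pmProd T₁.adjoint T₂.adjoint ≤ (pmProd T₁ T₂).adjoint :=
    (pmProd_isFormalAdjoint T₁ T₂ hd₁ hd₂).symm.le_adjoint hdp
  have hdom : (pmProd T₁.adjoint T₂.adjoint).domain = (pmProd T₁ T₂).adjoint.domain := by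
    refine le_antisymm le1.1 ?_
    intro y hy
    set w := (pmProd T₁ T₂).adjoint ⟨y, hy⟩ with hw_def
    have hw : ∀ x : (pmProd T₁ T₂).domain,
        ⟪w, (x : WithLp 2 (H₁ × H₂))⟫ = ⟪y, pmProd T₁ T₂ x⟫ :=
      fun x => adjoint_isFormalAdjoint hdp ⟨y, hy⟩ x
    have key1 : ∀ x₁ : T₁.domain, ⟪w.ofLp.1, (x₁ : H₁)⟫ = ⟪y.ofLp.1, T₁ x₁⟫ := by
      intro x₁
      have hmem : WithLp.toLp 2 ((x₁ : H₁), (0 : H₂)) ∈ (pmProd T₁ T₂).domain :=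
        ⟨x₁.2, (T₂.domain).zero_mem⟩
      have h := hw ⟨WithLp.toLp 2 ((x₁ : H₁), (0 : H₂)), hmem⟩
      have hz : T₂ ⟨(0 : H₂), hmem.2⟩ = 0 := by
        rw [show (⟨(0 : H₂), hmem.2⟩ : T₂.domain) = 0 from Subtype.ext rfl]; exact T₂.map_zero
      simp only [WithLp.prod_inner_apply] at h
      rw [show pmProd T₁ T₂ ⟨WithLp.toLp 2 ((x₁ : H₁), (0 : H₂)), hmem⟩ =
        WithLp.toLp 2 (T₁ ⟨x₁, hmem.1⟩, T₂ ⟨0, hmem.2⟩) from rfl] at h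
      simpa [hz] using h
    have key2 : ∀ x₂ : T₂.domain, ⟪w.ofLp.2, (x₂ : H₂)⟫ = ⟪y.ofLp.2, T₂ x₂⟫ := by
      intro x₂
      have hmem : WithLp.toLp 2 ((0 : H₁), (x₂ : H₂)) ∈ (pmProd T₁ T₂).domain :=
        ⟨(T₁.domain).zero_mem, x₂.2⟩
      have h := hw ⟨WithLp.toLp 2 ((0 : H₁), (x₂ : H₂)), hmem⟩
      have hz : T₁ ⟨(0 : H₁), hmem.1⟩ = 0 := by
        rw [show (⟨(0 : H₁), hmem.1⟩ : T₁.domain) = 0 from Subtype.ext rfl]; exact T₁.map_zero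
      simp only [WithLp.prod_inner_apply] at h
      rw [show pmProd T₁ T₂ ⟨WithLp.toLp 2 ((0 : H₁), (x₂ : H₂)), hmem⟩ =
        WithLp.toLp 2 (T₁ ⟨0, hmem.1⟩, T₂ ⟨x₂, hmem.2⟩) from rfl] at h
      simpa [hz] using h
    exact ⟨mem_adjoint_domain_of_exists _ ⟨w.ofLp.1, key1⟩,
      mem_adjoint_domain_of_exists _ ⟨w.ofLp.2, key2⟩⟩
  exact (eq_of_le_of_domain_eq le1 hdom).symm

/-- Let `T₁`, `T₂` be densely defined closed operators on complex Hilbert spaces `H₁`, `H₂`.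
Then `T₁` and `T₂` are both EP if and only if `T₁ ⊕ T₂` is EP. -/
theorem stmt1 (T₁ : H₁ →ₗ.[ℂ] H₁) (T₂ : H₂ →ₗ.[ℂ] H₂)
    (hd₁ : Dense (T₁.domain : Set H₁)) (hd₂ : Dense (T₂.domain : Set H₂))
    (hc₁ : IsClosed (T₁.graph : Set (H₁ × H₁))) (hc₂ : IsClosed (T₂.graph : Set (H₂ × H₂))) :
    (IsEP T₁ ∧ IsEP T₂) ↔ IsEP (pmProd T₁ T₂) := by
  have hadj := adjoint_pmProd T₁ T₂ hd₁ hd₂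
  have cont1 : Continuous fun z : WithLp 2 (H₁ × H₂) => z.ofLp.1 :=
    continuous_fst.comp (WithLp.prodContinuousLinearEquiv 2 ℂ H₁ H₂).continuous
  have cont2 : Continuous fun z : WithLp 2 (H₁ × H₂) => z.ofLp.2 :=
    continuous_snd.comp (WithLp.prodContinuousLinearEquiv 2 ℂ H₁ H₂).continuous
  constructor
  · rintro ⟨⟨hcl₁, hr₁⟩, ⟨hcl₂, hr₂⟩⟩
    constructor
    · have hs : (↑(pmRange (pmProd T₁ T₂)) : Set (WithLp 2 (H₁ × H₂))) =
          (fun z : WithLp 2 (H₁ × H₂) => z.ofLp.1) ⁻¹' ↑(pmRange T₁) ∩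
            (fun z : WithLp 2 (H₁ × H₂) => z.ofLp.2) ⁻¹' ↑(pmRange T₂) :=
        Set.ext fun z => pmRange_prod T₁ T₂ z
      rw [hs]
      exact (hcl₁.preimage cont1).inter (hcl₂.preimage cont2)
    · ext z
      rw [hadj, pmRange_prod, pmRange_prod, hr₁, hr₂]
  · rintro ⟨hcl, hr⟩
    have contm1 : Continuous fun x : H₁ => (WithLp.toLp 2 (x, (0 : H₂)) : WithLp 2 (H₁ × H₂)) :=
      (WithLp.prodContinuousLinearEquiv 2 ℂ H₁ H₂).symm.continuous.comp
        (continuous_id.prodMk continuous_const)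
    have contm2 : Continuous fun x : H₂ => (WithLp.toLp 2 ((0 : H₁), x) : WithLp 2 (H₁ × H₂)) :=
      (WithLp.prodContinuousLinearEquiv 2 ℂ H₁ H₂).symm.continuous.comp
        (continuous_const.prodMk continuous_id)
    refine ⟨⟨?_, ?_⟩, ⟨?_, ?_⟩⟩
    · have hs : (↑(pmRange T₁) : Set H₁) =
          (fun x : H₁ => (WithLp.toLp 2 (x, (0 : H₂)) : WithLp 2 (H₁ × H₂))) ⁻¹' (↑(pmRange (pmProd T₁ T₂)) : Set (WithLp 2 (H₁ × H₂))) :=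
        Set.ext fun x => by
          simpa using (pmRange_prod T₁ T₂ (WithLp.toLp 2 (x, (0 : H₂)) : WithLp 2 (H₁ × H₂))).symm
      rw [hs]
      exact hcl.preimage contm1
    · ext x
      constructor
      · intro hx
        have h : (WithLp.toLp 2 (x, (0 : H₂)) : WithLp 2 (H₁ × H₂)) ∈ pmRange (pmProd T₁ T₂) :=
          (pmRange_prod T₁ T₂ _).2 ⟨hx, zero_mem _⟩
        rw [hr, hadj] at h
        exact ((pmRange_prod T₁.adjoint T₂.adjoint _).1 h).1
      · intro hx
        have h : (WithLp.toLp 2 (x, (0 : H₂)) : WithLp 2 (H₁ × H₂)) ∈ pmRange (pmProd T₁.adjoint T₂.adjoint) :=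
          (pmRange_prod T₁.adjoint T₂.adjoint _).2 ⟨hx, zero_mem _⟩
        rw [← hadj, ← hr] at h
        exact ((pmRange_prod T₁ T₂ _).1 h).1
    · have hs : (↑(pmRange T₂) : Set H₂) =
          (fun x : H₂ => (WithLp.toLp 2 ((0 : H₁), x) : WithLp 2 (H₁ × H₂))) ⁻¹' (↑(pmRange (pmProd T₁ T₂)) : Set (WithLp 2 (H₁ × H₂))) :=
        Set.ext fun x => by
          simpa using (pmRange_prod T₁ T₂ (WithLp.toLp 2 ((0 : H₁), x) : WithLp 2 (H₁ × H₂))).symm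
      rw [hs]
      exact hcl.preimage contm2
    · ext x
      constructor
      · intro hx
        have h : (WithLp.toLp 2 ((0 : H₁), x) : WithLp 2 (H₁ × H₂)) ∈ pmRange (pmProd T₁ T₂) :=
          (pmRange_prod T₁ T₂ _).2 ⟨zero_mem _, hx⟩
        rw [hr, hadj] at h
        exact ((pmRange_prod T₁.adjoint T₂.adjoint _).1 h).2
      · intro hx
        have h : (WithLp.toLp 2 ((0 : H₁), x) : WithLp 2 (H₁ × H₂)) ∈ pmRange (pmProd T₁.adjoint T₂.adjoint) :=
          (pmRange_prod T₁.adjoint T₂.adjoint _).2 ⟨zero_mem _, hx⟩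
        rw [← hadj, ← hr] at h
        exact ((pmRange_prod T₁ T₂ _).1 h).2
end

section
/- Let T be a bounded linear operator on a complex Hilbert space H with closed range, let |T| denote the positive square root of T*T, and let U be a bounded operator on H satisfying: T = U ∘ |T|, Ux = 0 for all x ∈ ker T, and ‖Ux‖ = ‖x‖ for all x ∈ (ker T)ᗮ (so that T = U|T| is the polar decomposition of T). Then T is EP if and only if U is EP. -/
open scoped InnerProductSpace


variable {H : Type*} [NormedAddCommGroup H] [InnerProductSpace ℂ H] [CompleteSpace H]

/-- A bounded operator on a complex Hilbert space is EP if its range is closed and coincides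
with the range of its adjoint. -/
def IsEPBounded (A : H →L[ℂ] H) : Prop :=
  IsClosed ((LinearMap.range (A : H →ₗ[ℂ] H) : Submodule ℂ H) : Set H) ∧
    LinearMap.range (A : H →ₗ[ℂ] H) = LinearMap.range ((ContinuousLinearMap.adjoint A : H →L[ℂ] H) : H →ₗ[ℂ] H)

/-- Let `T` be a bounded operator on a complex Hilbert space `H` with closed range, let
`R = |T|` be the positive square root of `T*T`, and let `U` be a bounded operator with
`T = U ∘ |T|`, `U = 0` on `ker T` and `U` isometric on `(ker T)ᗮ` (so `T = U|T|` is the polar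
decomposition of `T`).  Then `T` is EP if and only if `U` is EP. -/
theorem stmt2 (T U R : H →L[ℂ] H)
    (hrange : IsClosed ((LinearMap.range (T : H →ₗ[ℂ] H) : Submodule ℂ H) : Set H))
    (hRpos : R.IsPositive)
    (hRsq : R ∘L R = ContinuousLinearMap.adjoint T ∘L T)
    (hTUR : T = U ∘L R)
    (hU0 : ∀ x ∈ LinearMap.ker (T : H →ₗ[ℂ] H), U x = 0)
    (hUiso : ∀ x ∈ (LinearMap.ker (T : H →ₗ[ℂ] H) : Submodule ℂ H)ᗮ, ‖U x‖ = ‖x‖) :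
    IsEPBounded T ↔ IsEPBounded U := by
  classical
  set K : Submodule ℂ H := LinearMap.ker (T : H →ₗ[ℂ] H) with hKdef
  haveI : CompleteSpace K := (ContinuousLinearMap.isClosed_ker T).completeSpace_coe
  have hRsa : ContinuousLinearMap.adjoint R = R := hRpos.isSelfAdjoint.adjoint_eq
  have hnorm : ∀ x, ‖R x‖ = ‖T x‖ := by
    intro x
    have h1 : ⟪R x, R x⟫_ℂ = ⟪T x, T x⟫_ℂ := by
      rw [← ContinuousLinearMap.adjoint_inner_left R, hRsa,
        ← ContinuousLinearMap.adjoint_inner_left T]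
      have := congrArg (fun A : H →L[ℂ] H => ⟪A x, x⟫_ℂ) hRsq
      simpa using this
    have h2 : ‖R x‖ ^ 2 = ‖T x‖ ^ 2 := by
      rw [← inner_self_eq_norm_sq (𝕜 := ℂ), ← inner_self_eq_norm_sq (𝕜 := ℂ), h1]
    nlinarith [norm_nonneg (R x), norm_nonneg (T x)]
  have hkerR : LinearMap.ker (R : H →ₗ[ℂ] H) = K := by
    ext x
    simp only [LinearMap.mem_ker, ContinuousLinearMap.coe_coe, hKdef, ← norm_eq_zero (a := R x), hnorm, norm_eq_zero]
  have horthR : (LinearMap.range (R : H →ₗ[ℂ] H))ᗮ = K := by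
    ext x
    rw [Submodule.mem_orthogonal]
    constructor
    · intro h
      have hall : ∀ y, ⟪y, R x⟫_ℂ = 0 := fun y => by
        rw [← hRsa, ContinuousLinearMap.adjoint_inner_right]
        exact h (R y) ⟨y, rfl⟩
      have hx : R x = 0 := inner_self_eq_zero.mp (hall (R x))
      rw [← hkerR]; exact hx
    · intro hx u hu
      obtain ⟨y, rfl⟩ := hu
      rw [ContinuousLinearMap.coe_coe, ← ContinuousLinearMap.adjoint_inner_right R, hRsa]
      have hx' : R x = 0 := by rw [← hkerR] at hx; exact hx
      rw [hx', inner_zero_right]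
  have hclos : (LinearMap.range (R : H →ₗ[ℂ] H)).topologicalClosure = Kᗮ := by
    rw [← Submodule.orthogonal_orthogonal_eq_closure, horthR]
  have hRmem : ∀ x, R x ∈ Kᗮ := fun x =>
    hclos ▸ (LinearMap.range (R : H →ₗ[ℂ] H)).le_topologicalClosure ⟨x, rfl⟩
  -- ker U = K
  have hkerU : LinearMap.ker (U : H →ₗ[ℂ] H) = K := by
    ext x
    simp only [LinearMap.mem_ker, ContinuousLinearMap.coe_coe]
    constructor
    · intro hx
      obtain ⟨p, hp, q, hq, hpq⟩ := K.exists_add_mem_mem_orthogonal x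
      have hUq : U q = 0 := by
        rw [hpq, map_add, hU0 p hp, zero_add] at hx; exact hx
      have hq0 : q = 0 := by
        have := hUiso q hq
        rw [hUq, norm_zero] at this
        exact (norm_eq_zero.mp this.symm)
      rw [hpq, hq0, add_zero]; exact hp
    · intro hx; exact hU0 x hx
  -- inner-product preservation on Kᗮ
  have hUinner : ∀ w ∈ Kᗮ, ∀ q ∈ Kᗮ, ⟪U w, U q⟫_ℂ = ⟪w, q⟫_ℂ := by
    intro w hw q hq
    have := LinearIsometry.inner_map_map (𝕜 := ℂ)
      { toLinearMap := U.toLinearMap.comp (Kᗮ).subtype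
        norm_map' := fun x => hUiso x x.2 } ⟨w, hw⟩ ⟨q, hq⟩
    exact this
  -- U† U = id on Kᗮ
  have hUU : ∀ w ∈ Kᗮ, ContinuousLinearMap.adjoint U (U w) = w := by
    intro w hw
    refine ext_inner_right ℂ fun v => ?_
    rw [ContinuousLinearMap.adjoint_inner_left]
    obtain ⟨p, hp, q, hq, hpq⟩ := K.exists_add_mem_mem_orthogonal v
    have hwp : ⟪w, p⟫_ℂ = 0 := Submodule.inner_left_of_mem_orthogonal hp hw
    rw [hpq, map_add, hU0 p hp, zero_add, hUinner w hw q hq, inner_add_right, hwp, zero_add]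
  -- range U = range T
  have hUTrange : LinearMap.range (U : H →ₗ[ℂ] H) = LinearMap.range (T : H →ₗ[ℂ] H) := by
    apply le_antisymm
    · rintro _ ⟨x, rfl⟩
      obtain ⟨p, hp, q, hq, hpq⟩ := K.exists_add_mem_mem_orthogonal x
      rw [hpq, map_add, ContinuousLinearMap.coe_coe, hU0 p hp, zero_add]
      have hqcl : q ∈ closure ((LinearMap.range (R : H →ₗ[ℂ] H) : Submodule ℂ H) : Set H) := by
        rw [← Submodule.topologicalClosure_coe, hclos]; exact hq
      have h1 : U q ∈ closure (U '' ((LinearMap.range (R : H →ₗ[ℂ] H) : Submodule ℂ H) : Set H)) :=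
        (image_closure_subset_closure_image U.continuous) ⟨q, hqcl, rfl⟩
      have h2 : U '' ((LinearMap.range (R : H →ₗ[ℂ] H) : Submodule ℂ H) : Set H) ⊆
          ((LinearMap.range (T : H →ₗ[ℂ] H) : Submodule ℂ H) : Set H) := by
        rintro _ ⟨_, ⟨y, rfl⟩, rfl⟩
        exact ⟨y, by rw [hTUR]; rfl⟩
      have := (closure_mono h2) h1
      rwa [hrange.closure_eq] at this
    · rintro _ ⟨x, rfl⟩
      exact ⟨R x, by rw [hTUR]; rfl⟩
  -- range U† = Kᗮ
  have hUadj : LinearMap.range ((ContinuousLinearMap.adjoint U : H →L[ℂ] H) : H →ₗ[ℂ] H) = Kᗮ := by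
    apply le_antisymm
    · rintro _ ⟨y, rfl⟩
      rw [Submodule.mem_orthogonal]
      intro u hu
      rw [ContinuousLinearMap.coe_coe, ContinuousLinearMap.adjoint_inner_right, hU0 u hu, inner_zero_left]
    · intro w hw
      exact ⟨U w, hUU w hw⟩
  -- T† = R ∘ U†
  have hTadj : ContinuousLinearMap.adjoint T = R ∘L ContinuousLinearMap.adjoint U := by
    rw [hTUR, ContinuousLinearMap.adjoint_comp, hRsa]
  -- range T† = range R
  have hTadjR : LinearMap.range ((ContinuousLinearMap.adjoint T : H →L[ℂ] H) : H →ₗ[ℂ] H) = LinearMap.range (R : H →ₗ[ℂ] H) := by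
    apply le_antisymm
    · rintro _ ⟨y, rfl⟩
      rw [hTadj]
      exact ⟨ContinuousLinearMap.adjoint U y, rfl⟩
    · rintro _ ⟨x, rfl⟩
      obtain ⟨p, hp, q, hq, hpq⟩ := K.exists_add_mem_mem_orthogonal x
      have hRp : R p = 0 := by rw [← hkerR] at hp; exact hp
      refine ⟨U q, ?_⟩
      rw [hTadj, ContinuousLinearMap.coe_coe, ContinuousLinearMap.coe_coe, ContinuousLinearMap.comp_apply, hUU q hq, hpq, map_add, hRp, zero_add]
  -- range R = Kᗮ
  have hRrange : LinearMap.range (R : H →ₗ[ℂ] H) = Kᗮ := by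
    apply le_antisymm
    · rintro _ ⟨x, rfl⟩; exact hRmem x
    · intro w hw
      have : U w ∈ LinearMap.range (T : H →ₗ[ℂ] H) := hUTrange ▸ ⟨w, rfl⟩
      obtain ⟨x, hx⟩ := this
      refine ⟨x, ?_⟩
      have : ContinuousLinearMap.adjoint U (T x) = w := by rw [ContinuousLinearMap.coe_coe] at hx; rw [hx]; exact hUU w hw
      have h2 : R x = ContinuousLinearMap.adjoint U (T x) := by
        rw [hTUR, ContinuousLinearMap.comp_apply, hUU (R x) (hRmem x)]
      rw [ContinuousLinearMap.coe_coe, h2, this]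
  rw [IsEPBounded, IsEPBounded, hTadjR, hRrange, hUadj, hUTrange]
end

section
/- Let T be a bounded linear operator on a complex Hilbert space H with closed range. Then T is EP if and only if for every natural number n ≥ 1 the power Tⁿ is EP, i.e., R(Tⁿ) is closed and R(Tⁿ) = R((Tⁿ)*). -/
variable {H : Type*} [NormedAddCommGroup H] [InnerProductSpace ℂ H] [CompleteSpace H]

lemma ker_eq_orth_range_adjoint' (A : H →L[ℂ] H) :
    LinearMap.ker (A : H →ₗ[ℂ] H) = (LinearMap.range ((ContinuousLinearMap.adjoint A : H →L[ℂ] H) : H →ₗ[ℂ] H))ᗮ := by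
  ext x
  simp only [LinearMap.mem_ker, Submodule.mem_orthogonal]
  constructor
  · rintro hx u ⟨y, rfl⟩
    rw [ContinuousLinearMap.coe_coe] at hx
    simp only [ContinuousLinearMap.coe_coe, ContinuousLinearMap.adjoint_inner_left, hx,
      inner_zero_right]
  · intro h
    have h2 := h (ContinuousLinearMap.adjoint A (A x)) ⟨A x, rfl⟩
    rw [ContinuousLinearMap.adjoint_inner_left] at h2
    exact inner_self_eq_zero.mp h2

lemma range_pow_eq_of_EP' (A : H →L[ℂ] H)
    (hc : IsClosed ((LinearMap.range (A : H →ₗ[ℂ] H) : Submodule ℂ H) : Set H))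
    (h : LinearMap.range (A : H →ₗ[ℂ] H) = LinearMap.range ((ContinuousLinearMap.adjoint A : H →L[ℂ] H) : H →ₗ[ℂ] H)) :
    ∀ n : ℕ, 1 ≤ n → LinearMap.range ((A ^ n : H →L[ℂ] H) : H →ₗ[ℂ] H) = LinearMap.range (A : H →ₗ[ℂ] H) := by
  have hker : LinearMap.ker (A : H →ₗ[ℂ] H) = (LinearMap.range (A : H →ₗ[ℂ] H))ᗮ := by
    rw [ker_eq_orth_range_adjoint' A, ← h]
  haveI : CompleteSpace (LinearMap.range (A : H →ₗ[ℂ] H) : Submodule ℂ H) := hc.completeSpace_coe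
  -- key step: A x lies in the range of A ∘ A
  have key : ∀ x : H, ∃ w : H, A (A w) = A x := by
    intro x
    set K : Submodule ℂ H := LinearMap.range (A : H →ₗ[ℂ] H) with hK
    set p : H := (K.orthogonalProjectionOnto x : H) with hp_def
    have hpK : p ∈ K := Submodule.coe_mem _
    have hp : x - p ∈ Kᗮ := Submodule.sub_starProjection_mem_orthogonal (K := K) x
    have hzero : A (x - p) = 0 := by
      show (A : H →ₗ[ℂ] H) (x - p) = 0
      rw [← LinearMap.mem_ker, hker]; exact hp
    have hAx : A x = A p := by
      have hmap : A x - A p = 0 := by rw [← map_sub]; exact hzero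
      exact sub_eq_zero.mp hmap
    obtain ⟨w, hw⟩ := hpK
    exact ⟨w, by rw [ContinuousLinearMap.coe_coe] at hw; rw [hw, ← hAx]⟩
  intro n hn
  induction n with
  | zero => omega
  | succ m ih =>
    rcases Nat.eq_or_lt_of_le hn with h1 | h1
    · rw [← h1]; simp [pow_one]
    · have hm : 1 ≤ m := by omega
      have ihm := ih hm
      rw [pow_succ']
      apply le_antisymm
      · rintro y ⟨x, rfl⟩
        rw [ContinuousLinearMap.coe_coe, ContinuousLinearMap.mul_apply]
        exact ⟨(A ^ m) x, rfl⟩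
      · rintro y ⟨x, rfl⟩
        obtain ⟨w, hw⟩ := key x
        have hAw : A w ∈ LinearMap.range (A : H →ₗ[ℂ] H) := ⟨w, rfl⟩
        rw [← ihm] at hAw
        obtain ⟨v, hv⟩ := hAw
        refine ⟨v, ?_⟩
        simp only [ContinuousLinearMap.coe_coe] at hv ⊢
        rw [ContinuousLinearMap.mul_apply, hv, hw]

lemma adjoint_pow' (A : H →L[ℂ] H) (n : ℕ) :
    ContinuousLinearMap.adjoint (A ^ n) = (ContinuousLinearMap.adjoint A) ^ n := by
  rw [← ContinuousLinearMap.star_eq_adjoint, ← ContinuousLinearMap.star_eq_adjoint, star_pow]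

/-- Let `T` be a bounded operator on a complex Hilbert space `H` with closed range.
Then `T` is EP if and only if `Tⁿ` is EP for every natural number `n ≥ 1`. -/
theorem stmt4 (T : H →L[ℂ] H)
    (hrange : IsClosed ((LinearMap.range (T : H →ₗ[ℂ] H) : Submodule ℂ H) : Set H)) :
    IsEPBounded T ↔ ∀ n : ℕ, 1 ≤ n → IsEPBounded (T ^ n) := by
  constructor
  · rintro ⟨hc, h⟩ n hn
    have hTn : LinearMap.range ((T ^ n : H →L[ℂ] H) : H →ₗ[ℂ] H) = LinearMap.range (T : H →ₗ[ℂ] H) :=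
      range_pow_eq_of_EP' T hc h n hn
    have hc' : IsClosed ((LinearMap.range ((ContinuousLinearMap.adjoint T : H →L[ℂ] H) : H →ₗ[ℂ] H) :
        Submodule ℂ H) : Set H) := by rw [← h]; exact hc
    have hadj : LinearMap.range ((ContinuousLinearMap.adjoint T : H →L[ℂ] H) : H →ₗ[ℂ] H) = LinearMap.range (T : H →ₗ[ℂ] H) := h.symm
    have h' : LinearMap.range ((ContinuousLinearMap.adjoint T : H →L[ℂ] H) : H →ₗ[ℂ] H) =
        LinearMap.range ((ContinuousLinearMap.adjoint (ContinuousLinearMap.adjoint T) : H →L[ℂ] H) : H →ₗ[ℂ] H) := by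
      rw [ContinuousLinearMap.adjoint_adjoint, hadj]
    have hT'n : LinearMap.range (((ContinuousLinearMap.adjoint T) ^ n : H →L[ℂ] H) : H →ₗ[ℂ] H) =
        LinearMap.range ((ContinuousLinearMap.adjoint T : H →L[ℂ] H) : H →ₗ[ℂ] H) :=
      range_pow_eq_of_EP' (ContinuousLinearMap.adjoint T) hc' h' n hn
    constructor
    · rw [hTn]; exact hc
    · rw [hTn, adjoint_pow', hT'n, hadj]
  · intro h
    have h1 := h 1 le_rfl
    rwa [pow_one] at h1
end

section
/- Let T be a bounded EP operator on a complex Hilbert space H. Then 0 is not a limit point of the spectrum of T: there exists ε > 0 such that every λ in the spectrum of T with λ ≠ 0 satisfies |λ| ≥ ε. -/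
variable {H : Type*} [NormedAddCommGroup H] [InnerProductSpace ℂ H] [CompleteSpace H]

/-- Let `T` be a bounded EP operator on a complex Hilbert space `H` (closed range and
`R(T) = R(T*)`).  Then `0` is not a limit point of the spectrum of `T`: there is `ε > 0` such
that every nonzero `λ` in the spectrum of `T` satisfies `|λ| ≥ ε`. -/
theorem stmt6 (T : H →L[ℂ] H)
    (hrange : IsClosed ((LinearMap.range (T : H →ₗ[ℂ] H) : Submodule ℂ H) : Set H))
    (hEP : LinearMap.range (T : H →ₗ[ℂ] H) = LinearMap.range ((ContinuousLinearMap.adjoint T : H →L[ℂ] H) : H →ₗ[ℂ] H)) :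
    ∃ ε : ℝ, 0 < ε ∧ ∀ lam ∈ spectrum ℂ T, lam ≠ 0 → ε ≤ ‖lam‖ := by
  classical
  set R : Submodule ℂ H := LinearMap.range (T : H →ₗ[ℂ] H) with hRdef
  haveI : CompleteSpace R := hrange.completeSpace_coe
  -- `Rᗮ ⊆ ker T`
  have hker : ∀ x : H, x ∈ Rᗮ → T x = 0 := by
    intro x hx
    have h1 : (ContinuousLinearMap.adjoint T) (T x) ∈ R :=
      hEP.ge (LinearMap.mem_range_self _ _)
    have h2 : inner ℂ ((ContinuousLinearMap.adjoint T) (T x)) x = (0 : ℂ) :=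
      (Submodule.mem_orthogonal R x).mp hx _ h1
    rw [ContinuousLinearMap.adjoint_inner_left] at h2
    exact inner_self_eq_zero.mp h2
  -- `ker T ⊆ Rᗮ`
  have hker' : ∀ x : H, T x = 0 → x ∈ Rᗮ := by
    intro x hx
    rw [Submodule.mem_orthogonal]
    rintro u hu
    obtain ⟨y, rfl⟩ := hEP.le hu
    rw [ContinuousLinearMap.coe_coe, ContinuousLinearMap.adjoint_inner_left, hx, inner_zero_right]
  -- `T` restricted to `R`, as a map `R →L R`
  set f : R →L[ℂ] R :=
    ContinuousLinearMap.codRestrict (T.comp R.subtypeL) R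
      (fun x => LinearMap.mem_range_self (T : H →ₗ[ℂ] H) (x : H)) with hfdef
  have hc : ∀ v : R, ((f v : H)) = T (v : H) := fun v => rfl
  have hinj : LinearMap.ker (f : R →ₗ[ℂ] R) = ⊥ := by
    rw [Submodule.eq_bot_iff]
    intro v hv
    have h1 : T ((v : H)) = 0 := by
      rw [← hc]
      exact congrArg Subtype.val (LinearMap.mem_ker.mp hv)
    have h2 : ((v : H)) ∈ Rᗮ := hker' _ h1
    have h4 : (v : H) = 0 :=
      (Submodule.disjoint_def.mp (Submodule.orthogonal_disjoint R)) _ v.2 h2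
    exact Subtype.ext h4
  have hsurj : LinearMap.range (f : R →ₗ[ℂ] R) = ⊤ := by
    rw [LinearMap.range_eq_top]
    rintro ⟨y, hy⟩
    obtain ⟨x, rfl⟩ := hy
    refine ⟨R.orthogonalProjectionOnto x, ?_⟩
    apply Subtype.ext
    refine (hc _).trans ?_
    have h1 : T (x - (R.orthogonalProjectionOnto x : H)) = 0 :=
      hker _ (Submodule.sub_starProjection_mem_orthogonal (K := R) x)
    have h2 : T x - T ((R.orthogonalProjectionOnto x : H)) = 0 := by
      rw [← map_sub]; exact h1
    exact (sub_eq_zero.mp h2).symm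
  set e := ContinuousLinearEquiv.ofBijective f hinj hsurj with hedef
  set V₀ : R →L[ℂ] R := (e.symm : R →L[ℂ] R) with hV₀def
  have hfV : ∀ v : R, f (V₀ v) = v := fun v =>
    ContinuousLinearEquiv.ofBijective_apply_symm_apply f hinj hsurj v
  have hVf : ∀ v : R, V₀ (f v) = v := fun v =>
    ContinuousLinearEquiv.ofBijective_symm_apply_apply f hinj hsurj v
  refine ⟨(‖V₀‖ + 1)⁻¹, by positivity, ?_⟩
  intro lam hlam hlam0
  by_contra hcon
  push_neg at hcon
  -- show that `lam` is not in the spectrum, a contradiction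
  apply spectrum.notMem_iff.mpr ?_ hlam
  -- `f - lam • 1` is a unit on `R`
  have hnorm : ‖lam • V₀‖ < 1 := by
    calc ‖lam • V₀‖ ≤ ‖lam‖ * ‖V₀‖ := ContinuousLinearMap.opNorm_smul_le lam V₀
      _ ≤ ‖lam‖ * (‖V₀‖ + 1) := by
          apply mul_le_mul_of_nonneg_left (by linarith) (norm_nonneg _)
      _ < (‖V₀‖ + 1)⁻¹ * (‖V₀‖ + 1) := by
          apply mul_lt_mul_of_pos_right hcon (by positivity)
      _ = 1 := by
          field_simp
  have hu1 : IsUnit (1 - lam • V₀) := (Units.oneSub (lam • V₀) hnorm).isUnit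
  have hfu : IsUnit f := by
    refine ⟨⟨f, V₀, ?_, ?_⟩, rfl⟩
    · ext v; exact congrArg Subtype.val (hfV v)
    · ext v; exact congrArg Subtype.val (hVf v)
  have hkey : (1 - lam • V₀) * f = f - lam • (1 : R →L[ℂ] R) := by
    ext v
    simp only [ContinuousLinearMap.mul_apply, ContinuousLinearMap.sub_apply,
      ContinuousLinearMap.smul_apply, ContinuousLinearMap.one_apply]
    rw [hVf v]
  have hUnit : IsUnit (f - lam • (1 : R →L[ℂ] R)) := by
    rw [← hkey]; exact hu1.mul hfu
  obtain ⟨u, hu⟩ := hUnit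
  set W : R →L[ℂ] R := (↑u⁻¹ : R →L[ℂ] R) with hWdef
  have hW1 : ∀ v : R, f (W v) - lam • W v = v := by
    intro v
    have h := u.mul_inv
    have h2 : ((↑u * ↑u⁻¹ : R →L[ℂ] R)) v = v := by rw [h]; rfl
    rw [hu] at h2
    simpa [ContinuousLinearMap.mul_apply, ContinuousLinearMap.sub_apply,
      ContinuousLinearMap.smul_apply, ContinuousLinearMap.one_apply] using h2
  have hW2 : ∀ v : R, W (f v) - lam • W v = v := by
    intro v
    have h := u.inv_mul
    have h2 : ((↑u⁻¹ * ↑u : R →L[ℂ] R)) v = v := by rw [h]; rfl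
    rw [hu] at h2
    simpa [ContinuousLinearMap.mul_apply, ContinuousLinearMap.sub_apply,
      ContinuousLinearMap.smul_apply, ContinuousLinearMap.one_apply, map_sub, map_smul] using h2
  -- build the inverse of `lam • 1 - T` on `H`
  set P : H →L[ℂ] H := R.subtypeL.comp (R.orthogonalProjectionOnto) with hPdef
  set V : H →L[ℂ] H :=
    R.subtypeL.comp (W.comp (R.orthogonalProjectionOnto)) - lam⁻¹ • (1 - P) with hVdef
  have hTP : ∀ x : H, T (P x) = T x := by
    intro x
    have h1 : T (x - (R.orthogonalProjectionOnto x : H)) = 0 :=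
      hker _ (Submodule.sub_starProjection_mem_orthogonal (K := R) x)
    have h2 : T x - T ((R.orthogonalProjectionOnto x : H)) = 0 := by
      rw [← map_sub]; exact h1
    exact (sub_eq_zero.mp h2).symm
  have hpi : ∀ v : R, R.orthogonalProjectionOnto (v : H) = v := fun v =>
    Submodule.orthogonalProjectionOnto_mem_subspace_eq_self v
  have hPapp : ∀ x : H, P x = (R.orthogonalProjectionOnto x : H) := fun x => rfl
  have hVapp : ∀ x : H,
      V x = (W (R.orthogonalProjectionOnto x) : H) - lam⁻¹ • (x - P x) := by
    intro x
    simp [hVdef, ContinuousLinearMap.sub_apply, ContinuousLinearMap.smul_apply,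
      ContinuousLinearMap.comp_apply, ContinuousLinearMap.one_apply]
  -- first identity : (T - lam) ∘ V = 1
  have hid1 : ∀ x : H, T (V x) - lam • V x = x := by
    intro x
    set p : R := R.orthogonalProjectionOnto x with hp
    have hTV : T (V x) = (f (W p) : H) := by
      rw [hVapp x]
      rw [map_sub, map_smul, map_sub]
      rw [hTP x]
      rw [sub_self, smul_zero, sub_zero, hc]
    have hlamV : lam • V x = lam • ((W p : H)) - (x - P x) := by
      rw [hVapp x, smul_sub, smul_smul, mul_inv_cancel₀ hlam0, one_smul]
    rw [hTV, hlamV]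
    have hW1' : (f (W p) : H) - lam • ((W p : H)) = (p : H) := by
      have := congrArg (Subtype.val) (hW1 p)
      simpa using this
    have hPx : P x = (p : H) := rfl
    calc (f (W p) : H) - (lam • ((W p : H)) - (x - P x))
        = ((f (W p) : H) - lam • ((W p : H))) + (x - P x) := by abel
      _ = (p : H) + (x - P x) := by rw [hW1']
      _ = x := by rw [hPx]; abel
  -- second identity : V ∘ (T - lam) = 1
  have hid2 : ∀ x : H, V (T x) - lam • V x = x := by
    intro x
    set p : R := R.orthogonalProjectionOnto x with hp
    have hpT : R.orthogonalProjectionOnto (T x) = f p := by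
      apply Subtype.ext
      rw [hc]
      have : T ((p : H)) = T x := hTP x
      rw [this]
      have hTmem : T x ∈ R := LinearMap.mem_range_self (T : H →ₗ[ℂ] H) x
      exact congrArg Subtype.val (hpi ⟨T x, hTmem⟩)
    have hPT : P (T x) = T x := by
      have hTmem : T x ∈ R := LinearMap.mem_range_self (T : H →ₗ[ℂ] H) x
      have := hpi ⟨T x, hTmem⟩
      rw [hPapp, this]
    have hVT : V (T x) = (W (f p) : H) := by
      rw [hVapp (T x), hpT, hPT, sub_self, smul_zero, sub_zero]
    have hlamV : lam • V x = lam • ((W p : H)) - (x - P x) := by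
      rw [hVapp x, smul_sub, smul_smul, mul_inv_cancel₀ hlam0, one_smul]
    rw [hVT, hlamV]
    have hW2' : (W (f p) : H) - lam • ((W p : H)) = (p : H) := by
      have := congrArg (Subtype.val) (hW2 p)
      simpa using this
    have hPx : P x = (p : H) := rfl
    calc (W (f p) : H) - (lam • ((W p : H)) - (x - P x))
        = ((W (f p) : H) - lam • ((W p : H))) + (x - P x) := by abel
      _ = (p : H) + (x - P x) := by rw [hW2']
      _ = x := by rw [hPx]; abel
  -- conclude
  refine ⟨⟨algebraMap ℂ (H →L[ℂ] H) lam - T, -V, ?_, ?_⟩, rfl⟩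
  · ext x
    simp only [ContinuousLinearMap.mul_apply, ContinuousLinearMap.sub_apply,
      ContinuousLinearMap.neg_apply, ContinuousLinearMap.one_apply,
      Algebra.algebraMap_eq_smul_one, ContinuousLinearMap.smul_apply, map_neg]
    have := hid1 x
    rw [neg_sub]
    exact this
  · ext x
    simp only [ContinuousLinearMap.mul_apply, ContinuousLinearMap.sub_apply,
      ContinuousLinearMap.neg_apply, ContinuousLinearMap.one_apply,
      Algebra.algebraMap_eq_smul_one, ContinuousLinearMap.smul_apply, map_neg, map_sub, map_smul]
    have h := hid2 x
    rw [smul_neg, sub_neg_eq_add, neg_add_eq_sub]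
    exact h
end

section
/- Let T be a densely defined closed operator on a complex Hilbert space H and let S be a bounded EP operator on H such that {S(Tx) : x ∈ D(T)} = R(T). Then the operator ST, defined on the domain D(T) by x ↦ S(Tx), is a closed operator. -/
open LinearPMap

variable {H : Type*} [NormedAddCommGroup H] [InnerProductSpace ℂ H] [CompleteSpace H]

/-- The composition `S ∘ T` of a bounded operator `S` with a partial operator `T`,
defined on `D(T)` by `x ↦ S (T x)`. -/
noncomputable def pmCompL (S : H →L[ℂ] H) (T : H →ₗ.[ℂ] H) : H →ₗ.[ℂ] H where
  domain := T.domain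
  toFun := (S : H →ₗ[ℂ] H) ∘ₗ T.toFun

/-- Let `T` be a densely defined closed operator on a complex Hilbert space `H` and let `S`
be a bounded EP operator on `H` such that `R(ST) = R(T)`.  Then `ST` (defined on `D(T)`)
is a closed operator. -/
theorem stmt7 (T : H →ₗ.[ℂ] H) (S : H →L[ℂ] H)
    (hdense : Dense (T.domain : Set H))
    (hclosed : IsClosed (T.graph : Set (H × H)))
    (hSrange : IsClosed ((LinearMap.range (S : H →ₗ[ℂ] H) : Submodule ℂ H) : Set H))
    (hSEP : LinearMap.range (S : H →ₗ[ℂ] H) = LinearMap.range (ContinuousLinearMap.adjoint S : H →ₗ[ℂ] H))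
    (hST : LinearMap.range (pmCompL S T).toFun = LinearMap.range T.toFun) :
    IsClosed ((pmCompL S T).graph : Set (H × H)) := by
  classical
  set K : Submodule ℂ H := LinearMap.range (S : H →ₗ[ℂ] H) with hK
  haveI : CompleteSpace K := hSrange.completeSpace_coe
  -- kernel of S is the orthogonal complement of its range
  have hker : LinearMap.ker (S : H →ₗ[ℂ] H) = Kᗮ := by
    ext x
    simp only [LinearMap.mem_ker, Submodule.mem_orthogonal]
    constructor
    · intro hx u hu
      rw [hSEP] at hu
      obtain ⟨y, rfl⟩ := hu
      rw [ContinuousLinearMap.coe_coe] at hx ⊢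
      rw [ContinuousLinearMap.adjoint_inner_left, hx, inner_zero_right]
    · intro h
      have h2 : ∀ y : H, (inner ℂ y (S x) : ℂ) = 0 := fun y => by
        have hy : ContinuousLinearMap.adjoint S y ∈ K := by
          rw [hSEP]; exact ⟨y, rfl⟩
        simpa [ContinuousLinearMap.adjoint_inner_left] using
          h (ContinuousLinearMap.adjoint S y) hy
      have := h2 (S x)
      rwa [inner_self_eq_zero] at this
  -- the restriction of `S` to its range, as a map `K →L K`
  set f : K →L[ℂ] K :=
    ContinuousLinearMap.codRestrict (S.comp K.subtypeL) K
      (fun x => LinearMap.mem_range_self (S : H →ₗ[ℂ] H) (x : H)) with hf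
  have hf_apply : ∀ x : K, (f x : H) = S (x : H) := fun x => rfl
  have hinj : LinearMap.ker (f : K →ₗ[ℂ] K) = ⊥ := by
    rw [LinearMap.ker_eq_bot']
    intro m hm
    have hm' : S (m : H) = 0 := congrArg Subtype.val hm
    have hmK : (m : H) ∈ Kᗮ := by rw [← hker]; exact hm'
    have : (m : H) = 0 := by
      have := hmK (m : H) m.2
      rwa [inner_self_eq_zero] at this
    exact Subtype.ext this
  have hsurj : LinearMap.range (f : K →ₗ[ℂ] K) = ⊤ := by
    rw [LinearMap.range_eq_top]
    rintro ⟨v, y, rfl⟩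
    obtain ⟨p, hp, q, hq, hyq⟩ := K.exists_add_mem_mem_orthogonal y
    refine ⟨⟨p, hp⟩, ?_⟩
    have hq0 : S q = 0 := by rw [← ContinuousLinearMap.coe_coe, ← LinearMap.mem_ker, hker]; exact hq
    apply Subtype.ext
    rw [ContinuousLinearMap.coe_coe, hf_apply]
    simp [hyq, _root_.map_add, hq0]
  set e := ContinuousLinearEquiv.ofBijective f hinj hsurj with he
  -- range of T is contained in K
  have hTK : ∀ x : T.domain, T x ∈ K := by
    intro x
    have : T x ∈ LinearMap.range T.toFun := ⟨x, rfl⟩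
    rw [← hST] at this
    obtain ⟨x', hx'⟩ := this
    exact ⟨T x', hx'⟩
  -- now sequential closedness
  rw [← isSeqClosed_iff_isClosed]
  intro seq p hseq hlim
  -- each seq n is (xₙ, S T xₙ)
  have hmem : ∀ n, ∃ x : T.domain, (x : H) = (seq n).1 ∧ S (T x) = (seq n).2 := by
    intro n
    obtain ⟨x, hx1, hx2⟩ := ((pmCompL S T).mem_graph_iff).mp (hseq n)
    exact ⟨x, hx1, hx2⟩
  choose x hx1 hx2 using hmem
  have hlim1 : Filter.Tendsto (fun n => ((x n : H))) Filter.atTop (nhds p.1) := by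
    have := (continuous_fst.tendsto p).comp hlim
    simpa [Function.comp_def, hx1] using this
  have hlim2 : Filter.Tendsto (fun n => S (T (x n))) Filter.atTop (nhds p.2) := by
    have := (continuous_snd.tendsto p).comp hlim
    simpa [Function.comp_def, hx2] using this
  -- p.2 ∈ K
  have hp2K : p.2 ∈ K := by
    have : IsSeqClosed (K : Set H) := hSrange.isSeqClosed
    exact this (fun n => LinearMap.mem_range_self (S : H →ₗ[ℂ] H) _) hlim2
  -- the sequence T xₙ in K
  set u : ℕ → K := fun n => ⟨T (x n), hTK (x n)⟩ with hu
  have hfu : ∀ n, f (u n) = ⟨S (T (x n)), LinearMap.mem_range_self (S : H →ₗ[ℂ] H) _⟩ := fun n => rfl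
  have hfulim : Filter.Tendsto (fun n => f (u n)) Filter.atTop (nhds ⟨p.2, hp2K⟩) := by
    rw [show (fun n => f (u n)) = fun n => (⟨S (T (x n)), LinearMap.mem_range_self (S : H →ₗ[ℂ] H) _⟩ : K)
      from funext hfu]
    rw [tendsto_subtype_rng]
    exact hlim2
  have hulim : Filter.Tendsto u Filter.atTop (nhds (e.symm ⟨p.2, hp2K⟩)) := by
    have : ∀ n, u n = e.symm (f (u n)) := fun n =>
      (ContinuousLinearEquiv.ofBijective_symm_apply_apply f hinj hsurj (u n)).symm
    rw [show u = fun n => e.symm (f (u n)) from funext this]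
    exact (e.symm.continuous.tendsto _).comp hfulim
  set z : H := (e.symm ⟨p.2, hp2K⟩ : H) with hz
  have hTxlim : Filter.Tendsto (fun n => T (x n)) Filter.atTop (nhds z) := by
    exact (continuous_subtype_val.tendsto _).comp hulim
  -- (p.1, z) ∈ graph T
  have hgr : (p.1, z) ∈ T.graph := by
    have hseqT : IsSeqClosed (T.graph : Set (H × H)) := hclosed.isSeqClosed
    refine hseqT (x := fun n => ((x n : H), T (x n))) (fun n => ?_) ?_
    · exact T.mem_graph_iff.mpr ⟨x n, rfl, rfl⟩
    · exact hlim1.prodMk_nhds hTxlim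
  obtain ⟨x0, hx01, hx02⟩ := T.mem_graph_iff.mp hgr
  -- S z = p.2
  have hSz : S z = p.2 := by
    have : f (e.symm ⟨p.2, hp2K⟩) = ⟨p.2, hp2K⟩ := e.apply_symm_apply _
    have := congrArg Subtype.val this
    simpa [hf_apply] using this
  refine ((pmCompL S T).mem_graph_iff).mpr ⟨x0, hx01, ?_⟩
  show S (T x0) = p.2
  rw [hx02, hSz]
end

section
/- Let T be a bounded EP operator on a complex Hilbert space H and let |T| be the positive square root of T*T. Then R(T) = R(|T|) = R(|T|^α) for every real α > 0, where |T|^α is defined by the continuous functional calculus. -/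
open scoped InnerProductSpace
open ContinuousLinearMap

variable {H : Type*} [NormedAddCommGroup H] [InnerProductSpace ℂ H] [CompleteSpace H]

lemma aux_isUnit {A : H →L[ℂ] H} (hA : IsSelfAdjoint A) {m : ℝ} (hm : 0 < m)
    (hbd : ∀ x, m * ‖x‖ ≤ ‖A x‖) : IsUnit A := by
  rw [ContinuousLinearMap.isUnit_iff_bijective]
  have hadj : ContinuousLinearMap.adjoint A = A := hA
  have hker : ∀ x, A x = 0 → x = 0 := by
    intro x hx
    have h1 := hbd x
    rw [hx, norm_zero] at h1
    have h2 : ‖x‖ ≤ 0 := by nlinarith [norm_nonneg x]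
    rwa [norm_le_zero_iff] at h2
  have hinj : Function.Injective A := by
    intro x y hxy
    have := hker (x - y) (by rw [map_sub, hxy, sub_self])
    rwa [sub_eq_zero] at this
  refine ⟨hinj, ?_⟩
  have hanti : AntilipschitzWith ⟨m⁻¹, by positivity⟩ A := by
    apply A.antilipschitz_of_bound
    intro x
    change ‖x‖ ≤ m⁻¹ * ‖A x‖
    rw [le_inv_mul_iff₀ hm]
    exact hbd x
  have hcl : IsClosed (Set.range A) := hanti.isClosed_range A.uniformContinuous
  have hcl' : IsClosed ((LinearMap.range (A : H →ₗ[ℂ] H) : Submodule ℂ H) : Set H) := by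
    exact hcl
  haveI : CompleteSpace (LinearMap.range (A : H →ₗ[ℂ] H) : Submodule ℂ H) := hcl'.completeSpace_coe
  have horth : (LinearMap.range (A : H →ₗ[ℂ] H))ᗮ = ⊥ := by
    rw [Submodule.eq_bot_iff]
    intro x hx
    have hAx : A x = 0 := by
      have h := hx (A (A x)) ⟨A x, rfl⟩
      have h2 := ContinuousLinearMap.adjoint_inner_left A x (A x)
      rw [hadj] at h2
      exact inner_self_eq_zero.mp (h2.symm.trans h)
    have := hker x hAx
    simp [this]
  have : LinearMap.range (A : H →ₗ[ℂ] H) = ⊤ := (Submodule.orthogonal_eq_bot_iff).mp horth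
  exact LinearMap.range_eq_top.mp this

lemma aux_ker_orth (A : H →L[ℂ] H) :
    (LinearMap.ker (A : H →ₗ[ℂ] H) : Submodule ℂ H) = (LinearMap.range (ContinuousLinearMap.adjoint A : H →ₗ[ℂ] H))ᗮ := by
  ext x
  rw [LinearMap.mem_ker, Submodule.mem_orthogonal']
  constructor
  · rintro hx u ⟨y, rfl⟩
    rw [ContinuousLinearMap.coe_coe, ContinuousLinearMap.adjoint_inner_right, show A x = 0 from hx, inner_zero_left]
  · intro h
    have h1 := h (ContinuousLinearMap.adjoint A (A x)) ⟨A x, rfl⟩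
    rw [ContinuousLinearMap.adjoint_inner_right] at h1
    exact inner_self_eq_zero.mp h1

lemma aux_sq_le {a b : ℝ} (ha : 0 ≤ a) (hb : 0 ≤ b) (h : a ^ 2 ≤ b ^ 2) : a ≤ b := by
  nlinarith

set_option maxHeartbeats 1000000 in
/-- Let `T` be a bounded EP operator on a complex Hilbert space `H` (closed range and
`R(T) = R(T*)`), and let `R = |T|` be the positive square root of `T*T`.  Then
`R(T) = R(|T|) = R(|T|^α)` for every real `α > 0`, where `|T|^α = cfc (t ↦ t^α) |T|` is given
by the continuous functional calculus. -/
theorem stmt10 (T R : H →L[ℂ] H)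
    (hrange : IsClosed ((LinearMap.range (T : H →ₗ[ℂ] H) : Submodule ℂ H) : Set H))
    (hEP : LinearMap.range (T : H →ₗ[ℂ] H) = LinearMap.range (ContinuousLinearMap.adjoint T : H →ₗ[ℂ] H))
    (hRpos : R.IsPositive)
    (hRsq : R ∘L R = ContinuousLinearMap.adjoint T ∘L T) :
    LinearMap.range (T : H →ₗ[ℂ] H) = LinearMap.range (R : H →ₗ[ℂ] H) ∧
      ∀ α : ℝ, 0 < α →
        LinearMap.range (R : H →ₗ[ℂ] H) = LinearMap.range ((cfc (fun t : ℝ => t ^ α) R : H →L[ℂ] H) : H →ₗ[ℂ] H) := by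
  have hRsa : IsSelfAdjoint R := hRpos.isSelfAdjoint
  have hRadj : ContinuousLinearMap.adjoint R = R := hRsa
  have hTT : ∀ x, ContinuousLinearMap.adjoint T (T x) = R (R x) := by
    intro x
    have := congrArg (fun S : H →L[ℂ] H => S x) hRsq
    simpa using this.symm
  -- equality of norms
  have hnorm : ∀ x, ‖T x‖ = ‖R x‖ := by
    intro x
    have h1 : ⟪T x, T x⟫_ℂ = ⟪R x, R x⟫_ℂ := by
      have e1 := ContinuousLinearMap.adjoint_inner_left T x (T x)
      have e2 := ContinuousLinearMap.adjoint_inner_left R x (R x)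
      rw [hRadj] at e2
      rw [← e1, hTT x, e2]
    rw [@norm_eq_sqrt_re_inner ℂ _ _ _ _ (T x), @norm_eq_sqrt_re_inner ℂ _ _ _ _ (R x), h1]
  have hkerTR : LinearMap.ker (T : H →ₗ[ℂ] H) = LinearMap.ker (R : H →ₗ[ℂ] H) := by
    ext x
    rw [LinearMap.mem_ker, LinearMap.mem_ker, ContinuousLinearMap.coe_coe, ContinuousLinearMap.coe_coe, ← norm_eq_zero, hnorm x, norm_eq_zero]
  -- (ker T)ᗮ = range T
  have h1 : ((LinearMap.ker (T : H →ₗ[ℂ] H) : Submodule ℂ H))ᗮ = LinearMap.range (T : H →ₗ[ℂ] H) := by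
    rw [aux_ker_orth T, Submodule.orthogonal_orthogonal_eq_closure, ← hEP]
    exact le_antisymm (Submodule.topologicalClosure_minimal _ le_rfl hrange)
      (Submodule.le_topologicalClosure _)
  haveI : CompleteSpace (LinearMap.range (T : H →ₗ[ℂ] H) : Submodule ℂ H) := hrange.completeSpace_coe
  -- range T ≤ range R
  have hTsubR : LinearMap.range (T : H →ₗ[ℂ] H) ≤ LinearMap.range (R : H →ₗ[ℂ] H) := by
    intro y hy
    rw [hEP] at hy
    obtain ⟨z, rfl⟩ := hy
    obtain ⟨z₁, hz₁, z₂, hz₂, rfl⟩ := (LinearMap.range (T : H →ₗ[ℂ] H)).exists_add_mem_mem_orthogonal z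
    obtain ⟨w, rfl⟩ := hz₁
    have hz₂0 : ContinuousLinearMap.adjoint T z₂ = 0 := by
      have hker : z₂ ∈ LinearMap.ker (ContinuousLinearMap.adjoint T : H →ₗ[ℂ] H) := by
        rw [aux_ker_orth (ContinuousLinearMap.adjoint T),
          ContinuousLinearMap.adjoint_adjoint]
        exact hz₂
      exact hker
    rw [ContinuousLinearMap.coe_coe, ContinuousLinearMap.coe_coe, map_add, hz₂0, add_zero, hTT w]
    exact ⟨R w, rfl⟩
  -- range R ≤ range T
  have hRsub : LinearMap.range (R : H →ₗ[ℂ] H) ≤ LinearMap.range (T : H →ₗ[ℂ] H) := by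
    rw [← h1, hkerTR]
    rintro _ ⟨x, rfl⟩
    rw [Submodule.mem_orthogonal]
    intro u hu
    have hu0 : R u = 0 := hu
    have e2 := ContinuousLinearMap.adjoint_inner_left R x u
    rw [hRadj, hu0, inner_zero_left] at e2
    exact e2.symm
  have hTR : LinearMap.range (T : H →ₗ[ℂ] H) = LinearMap.range (R : H →ₗ[ℂ] H) := le_antisymm hTsubR hRsub
  refine ⟨hTR, ?_⟩
  -- Part 2
  have hKR : IsClosed ((LinearMap.range (R : H →ₗ[ℂ] H) : Submodule ℂ H) : Set H) := hTR ▸ hrange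
  have hkerR_orthR : ((LinearMap.ker (R : H →ₗ[ℂ] H) : Submodule ℂ H))ᗮ = LinearMap.range (R : H →ₗ[ℂ] H) := by
    rw [← hkerTR, h1, hTR]
  haveI : CompleteSpace (LinearMap.range (R : H →ₗ[ℂ] H) : Submodule ℂ H) := hKR.completeSpace_coe
  -- R is bounded below on its range
  obtain ⟨C, hC, hCf⟩ := (R.codRestrict (LinearMap.range (R : H →ₗ[ℂ] H))
      (fun x => LinearMap.mem_range_self _ x)).exists_preimage_norm_le
      (by rintro ⟨y, x, rfl⟩; exact ⟨x, rfl⟩)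
  have hbelow : ∀ v ∈ LinearMap.range (R : H →ₗ[ℂ] H), ‖v‖ ≤ C * ‖R v‖ := by
    intro v hv
    obtain ⟨x, hx1, hx2⟩ := hCf ⟨R v, LinearMap.mem_range_self _ _⟩
    have hRx : R x = R v := congrArg Subtype.val hx1
    have hu : x - v ∈ LinearMap.ker (R : H →ₗ[ℂ] H) := by
      rw [LinearMap.mem_ker, ContinuousLinearMap.coe_coe, map_sub, hRx, sub_self]
    have hvo : v ∈ ((LinearMap.ker (R : H →ₗ[ℂ] H) : Submodule ℂ H))ᗮ := hkerR_orthR ▸ hv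
    have hiuv : ⟪x - v, v⟫_ℂ = 0 :=
      (Submodule.mem_orthogonal _ _).mp hvo (x - v) hu
    have hnx : ‖v‖ ≤ ‖x‖ := by
      have hsq := norm_add_sq_eq_norm_sq_add_norm_sq_of_inner_eq_zero (x - v) v hiuv
      rw [sub_add_cancel] at hsq
      nlinarith [norm_nonneg (x - v), norm_nonneg x, norm_nonneg v]
    exact hnx.trans hx2
  -- quadratic form bound on the range
  have hR0 : (0 : H →L[ℂ] H) ≤ R := (ContinuousLinearMap.nonneg_iff_isPositive R).mpr hRpos
  have hspec0 : ∀ t ∈ spectrum ℝ R, (0 : ℝ) ≤ t := fun t ht => spectrum_nonneg_of_nonneg hR0 ht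
  set Q : H →L[ℂ] H := cfc Real.sqrt R with hQdef
  have hQsa : IsSelfAdjoint Q := cfc_predicate Real.sqrt R
  have hQadj : ContinuousLinearMap.adjoint Q = Q := hQsa
  have hQmul : Q * Q = R := by
    rw [hQdef, ← cfc_mul Real.sqrt Real.sqrt R
      Real.continuous_sqrt.continuousOn Real.continuous_sqrt.continuousOn]
    have : cfc (fun t : ℝ => Real.sqrt t * Real.sqrt t) R = cfc (id : ℝ → ℝ) R :=
      cfc_congr fun t ht => Real.mul_self_sqrt (hspec0 t ht)
    rw [this, cfc_id ℝ R hRsa]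
  have hQQ : ∀ v, R v = Q (Q v) := by
    intro v
    conv_lhs => rw [← hQmul]
    rfl
  have hform : ∀ v : H, RCLike.re ⟪R v, v⟫_ℂ = ‖Q v‖ ^ 2 := by
    intro v
    have e := ContinuousLinearMap.adjoint_inner_left Q v (Q v)
    rw [hQadj] at e
    rw [hQQ v, e, inner_self_eq_norm_sq]
  set c₂ : ℝ := ((C * (‖Q‖ + 1)) ^ 2)⁻¹ with hc₂def
  have hD0 : 0 < C * (‖Q‖ + 1) := by positivity
  have hc₂ : 0 < c₂ := by positivity
  have hquad : ∀ v ∈ LinearMap.range (R : H →ₗ[ℂ] H), c₂ * ‖v‖ ^ 2 ≤ RCLike.re ⟪R v, v⟫_ℂ := by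
    intro v hv
    have h3 : ‖v‖ ≤ (C * (‖Q‖ + 1)) * ‖Q v‖ := by
      have h2 : ‖R v‖ ≤ (‖Q‖ + 1) * ‖Q v‖ := by
        rw [hQQ v]
        calc ‖Q (Q v)‖ ≤ ‖Q‖ * ‖Q v‖ := Q.le_opNorm _
        _ ≤ (‖Q‖ + 1) * ‖Q v‖ := by nlinarith [norm_nonneg (Q v)]
      calc ‖v‖ ≤ C * ‖R v‖ := hbelow v hv
      _ ≤ C * ((‖Q‖ + 1) * ‖Q v‖) := by nlinarith
      _ = (C * (‖Q‖ + 1)) * ‖Q v‖ := by ring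
    rw [hform v, hc₂def]
    rw [inv_mul_le_iff₀ (by positivity)]
    nlinarith [norm_nonneg v, norm_nonneg (Q v)]
  -- the spectral gap
  have hgap : ∀ lam ∈ spectrum ℝ R, lam = 0 ∨ c₂ ≤ lam := by
    intro lam hlam
    by_contra hcon
    push_neg at hcon
    obtain ⟨hne, hlt⟩ := hcon
    have hlam0 : 0 ≤ lam := spectrum_nonneg_of_nonneg hR0 hlam
    have hlampos : 0 < lam := lt_of_le_of_ne hlam0 (Ne.symm hne)
    set A : H →L[ℂ] H := algebraMap ℝ (H →L[ℂ] H) lam - R with hAdef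
    have hAsa : IsSelfAdjoint A :=
      (IsSelfAdjoint.algebraMap (H →L[ℂ] H) (IsSelfAdjoint.all lam)).sub hRsa
    have hAapp : ∀ x, A x = lam • x - R x := by
      intro x
      rw [hAdef, ContinuousLinearMap.sub_apply, Algebra.algebraMap_eq_smul_one,
        ContinuousLinearMap.smul_apply, ContinuousLinearMap.one_apply]
    haveI : CompleteSpace (LinearMap.ker (R : H →ₗ[ℂ] H) : Submodule ℂ H) :=
      (ContinuousLinearMap.isClosed_ker R).completeSpace_coe
    set m : ℝ := min lam (c₂ - lam) with hmdef
    have hm : 0 < m := lt_min hlampos (by linarith)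
    have hbdA : ∀ x, m * ‖x‖ ≤ ‖A x‖ := by
      intro x
      obtain ⟨u, hu, v, hv, rfl⟩ := (LinearMap.ker (R : H →ₗ[ℂ] H)).exists_add_mem_mem_orthogonal x
      have hRu : R u = 0 := hu
      have hAx : A (u + v) = lam • u + (lam • v - R v) := by
        rw [hAapp, map_add, hRu, smul_add]
        abel
      have hvR : v ∈ LinearMap.range (R : H →ₗ[ℂ] H) := hkerR_orthR ▸ hv
      have hw : lam • v - R v ∈ ((LinearMap.ker (R : H →ₗ[ℂ] H) : Submodule ℂ H))ᗮ := by
        refine Submodule.sub_mem _ (Submodule.smul_of_tower_mem _ lam hv) ?_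
        rw [hkerR_orthR]
        exact LinearMap.mem_range_self _ v
      have hinner1 : ⟪lam • u, lam • v - R v⟫_ℂ = 0 :=
        (Submodule.mem_orthogonal _ _).mp hw (lam • u)
          (Submodule.smul_of_tower_mem _ lam hu)
      have hinner2 : ⟪u, v⟫_ℂ = 0 := (Submodule.mem_orthogonal _ _).mp hv u hu
      have hnormsq : ‖A (u + v)‖ ^ 2 = ‖lam • u‖ ^ 2 + ‖lam • v - R v‖ ^ 2 := by
        rw [hAx]
        rw [pow_two, pow_two, pow_two]
        exact norm_add_sq_eq_norm_sq_add_norm_sq_of_inner_eq_zero _ _ hinner1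
      have hxsq : ‖u + v‖ ^ 2 = ‖u‖ ^ 2 + ‖v‖ ^ 2 := by
        rw [pow_two, pow_two, pow_two]
        exact norm_add_sq_eq_norm_sq_add_norm_sq_of_inner_eq_zero _ _ hinner2
      have hnsmul : ‖lam • u‖ = lam * ‖u‖ := by
        rw [norm_smul, Real.norm_eq_abs, abs_of_pos hlampos]
      have h5 : (c₂ - lam) * ‖v‖ ≤ ‖lam • v - R v‖ := by
        rcases eq_or_ne v 0 with rfl | hv0
        · simp
        · have hvpos : 0 < ‖v‖ := norm_pos_iff.mpr hv0
          have hre : RCLike.re ⟪lam • v - R v, v⟫_ℂ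
              = lam * ‖v‖ ^ 2 - RCLike.re ⟪R v, v⟫_ℂ := by
            rw [inner_sub_left, map_sub]
            congr 1
            have : ⟪lam • v, v⟫_ℂ = (lam : ℂ) * ⟪v, v⟫_ℂ := by
              rw [← Complex.coe_smul, inner_smul_left]
              norm_num
            rw [this]
            simp [inner_self_eq_norm_sq]
            left; rw [← Complex.ofReal_pow, Complex.ofReal_re]
          have habs : |RCLike.re ⟪lam • v - R v, v⟫_ℂ| ≤ ‖lam • v - R v‖ * ‖v‖ :=
            (RCLike.abs_re_le_norm _).trans (norm_inner_le_norm _ _)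
          have hq := hquad v hvR
          rw [hre] at habs
          have habs2 : (RCLike.re ⟪R v, v⟫_ℂ) - lam * ‖v‖ ^ 2
              ≤ ‖lam • v - R v‖ * ‖v‖ := by
            have h7 := neg_abs_le (lam * ‖v‖ ^ 2 - RCLike.re ⟪R v, v⟫_ℂ)
            linarith
          exact le_of_mul_le_mul_right (by nlinarith) hvpos
      have hmu : m ≤ lam := min_le_left _ _
      have hmv : m ≤ c₂ - lam := min_le_right _ _
      have hclam : 0 < c₂ - lam := by linarith
      apply aux_sq_le (by positivity) (norm_nonneg _)
      rw [mul_pow, hnormsq, hxsq, hnsmul]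
      have e1 : (c₂ - lam) ^ 2 * ‖v‖ ^ 2 ≤ ‖lam • v - R v‖ ^ 2 := by
        nlinarith [mul_self_le_mul_self
          (by positivity : (0:ℝ) ≤ (c₂ - lam) * ‖v‖) h5]
      have e2 : m ^ 2 * ‖u‖ ^ 2 ≤ (lam * ‖u‖) ^ 2 := by
        nlinarith [mul_le_mul hmu hmu hm.le hlampos.le, sq_nonneg ‖u‖]
      have e3 : m ^ 2 * ‖v‖ ^ 2 ≤ (c₂ - lam) ^ 2 * ‖v‖ ^ 2 := by
        nlinarith [mul_le_mul hmv hmv hm.le hclam.le, sq_nonneg ‖v‖]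
      nlinarith [e1, e2, e3]
    exact spectrum.mem_iff.mp hlam (aux_isUnit hAsa hm hbdA)
  -- the cfc part
  intro α hα
  have hfc : ContinuousOn (fun t : ℝ => t ^ α) (spectrum ℝ R) := fun t _ =>
    (Real.continuousAt_rpow_const t α (Or.inr hα.le)).continuousWithinAt
  have hmaxpos : ∀ t : ℝ, 0 < max t c₂ := fun t => lt_max_of_lt_right hc₂
  have hGc : Continuous (fun t : ℝ => t * (max t c₂) ^ (-α)) :=
    continuous_id.mul ((continuous_id.max continuous_const).rpow_const
      (fun t => Or.inl (hmaxpos t).ne'))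
  have hHc : Continuous (fun t : ℝ => (max t c₂) ^ (α - 1)) :=
    (continuous_id.max continuous_const).rpow_const (fun t => Or.inl (hmaxpos t).ne')
  have heq1 : Set.EqOn (fun t : ℝ => t ^ α * (t * (max t c₂) ^ (-α))) id
      (spectrum ℝ R) := by
    intro t ht
    rcases hgap t ht with h0 | hc
    · subst h0; simp [Real.zero_rpow (ne_of_gt hα)]
    · have ht0 : 0 < t := lt_of_lt_of_le hc₂ hc
      have hmax : max t c₂ = t := max_eq_left hc
      simp only [id_eq, hmax]
      rw [show t ^ α * (t * t ^ (-α)) = t ^ α * t ^ (-α) * t by ring,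
        ← Real.rpow_add ht0, add_neg_cancel, Real.rpow_zero, one_mul]
  have heq2 : Set.EqOn (fun t : ℝ => t * (max t c₂) ^ (α - 1)) (fun t : ℝ => t ^ α)
      (spectrum ℝ R) := by
    intro t ht
    rcases hgap t ht with h0 | hc
    · subst h0; simp [Real.zero_rpow (ne_of_gt hα)]
    · have ht0 : 0 < t := lt_of_lt_of_le hc₂ hc
      have hmax : max t c₂ = t := max_eq_left hc
      simp only [hmax]
      rw [show t * t ^ (α - 1) = t ^ (1:ℝ) * t ^ (α - 1) by rw [Real.rpow_one],
        ← Real.rpow_add ht0]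
      norm_num
  have hmul1 : R = cfc (fun t : ℝ => t ^ α) R
      * cfc (fun t : ℝ => t * (max t c₂) ^ (-α)) R := by
    rw [← cfc_mul _ _ R hfc hGc.continuousOn, cfc_congr heq1, cfc_id ℝ R hRsa]
  have hmul2 : cfc (fun t : ℝ => t ^ α) R
      = R * cfc (fun t : ℝ => (max t c₂) ^ (α - 1)) R := by
    calc cfc (fun t : ℝ => t ^ α) R
        = cfc (fun t : ℝ => t * (max t c₂) ^ (α - 1)) R := (cfc_congr heq2).symm
    _ = cfc (fun t : ℝ => t) R * cfc (fun t : ℝ => (max t c₂) ^ (α - 1)) R :=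
        cfc_mul _ _ R continuousOn_id hHc.continuousOn
    _ = R * cfc (fun t : ℝ => (max t c₂) ^ (α - 1)) R := by rw [cfc_id' ℝ R hRsa]
  apply le_antisymm
  · rintro _ ⟨x, rfl⟩
    refine ⟨cfc (fun t : ℝ => t * (max t c₂) ^ (-α)) R x, ?_⟩
    conv_rhs => rw [hmul1]
    rfl
  · rintro _ ⟨x, rfl⟩
    refine ⟨cfc (fun t : ℝ => (max t c₂) ^ (α - 1)) R x, ?_⟩
    conv_rhs => rw [hmul2]
    rfl
end

section
/- Let T be a bounded linear operator on a complex Hilbert space H, let |T| be the positive square root of T*T, and suppose that for some real α with 0 < α < 1 one has R(T) = R(|T|) = R(|T|^α), where |T|^α is defined by the continuous functional calculus. Then T is EP: R(T) is closed and R(T) = R(T*). -/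
variable {H : Type*} [NormedAddCommGroup H] [InnerProductSpace ℂ H] [CompleteSpace H]

open ContinuousLinearMap in
/-- A Douglas-type factorization bound: if `A` and `B` are self-adjoint and
`range B ⊆ range A`, then `‖B x‖ ≤ c * ‖A x‖` for some constant `c`. -/
private lemma aux_douglas_bound {A B : H →L[ℂ] H} (hA : IsSelfAdjoint A) (hB : IsSelfAdjoint B)
    (h : LinearMap.range (B : H →ₗ[ℂ] H) ≤ LinearMap.range (A : H →ₗ[ℂ] H)) :
    ∃ c : ℝ, ∀ x, ‖B x‖ ≤ c * ‖A x‖ := by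
  haveI : CompleteSpace (LinearMap.ker (A : H →ₗ[ℂ] H)) :=
    (ContinuousLinearMap.isClosed_ker A).completeSpace_coe
  have huniq : ∀ y y' : H, y ∈ (LinearMap.ker (A : H →ₗ[ℂ] H))ᗮ → y' ∈ (LinearMap.ker (A : H →ₗ[ℂ] H))ᗮ →
      A y = A y' → y = y' := by
    intro y y' hy hy' hAyy
    have hmem : y - y' ∈ LinearMap.ker (A : H →ₗ[ℂ] H) ⊓ (LinearMap.ker (A : H →ₗ[ℂ] H))ᗮ := by
      refine ⟨?_, sub_mem hy hy'⟩
      simp [LinearMap.mem_ker, map_sub, hAyy]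
    rw [Submodule.inf_orthogonal_eq_bot, Submodule.mem_bot] at hmem
    exact sub_eq_zero.mp hmem
  have hex : ∀ x : H, ∃ y : H, y ∈ (LinearMap.ker (A : H →ₗ[ℂ] H))ᗮ ∧ A y = B x := by
    intro x
    obtain ⟨z, hz⟩ := h (LinearMap.mem_range_self (B : H →ₗ[ℂ] H) x)
    obtain ⟨z₁, hz₁, z₂, hz₂, hsum⟩ := (LinearMap.ker (A : H →ₗ[ℂ] H)).exists_add_mem_mem_orthogonal z
    refine ⟨z₂, hz₂, ?_⟩
    have hz₁' : A z₁ = 0 := hz₁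
    calc A z₂ = A (z₁ + z₂) - A z₁ := by rw [map_add]; abel
      _ = B x := by rw [hz₁', ← hsum, show A z = B x from hz]; abel
  choose Dfun hDmem hDA using hex
  have hDuniq : ∀ (x y : H), y ∈ (LinearMap.ker (A : H →ₗ[ℂ] H))ᗮ → A y = B x → y = Dfun x :=
    fun x y hy hAy => huniq y (Dfun x) hy (hDmem x) (by rw [hAy, hDA])
  have hadd : ∀ x y, Dfun (x + y) = Dfun x + Dfun y := by
    intro x y
    refine (hDuniq (x + y) _ (add_mem (hDmem x) (hDmem y)) ?_).symm
    rw [map_add, hDA, hDA, map_add]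
  have hsmul : ∀ (c : ℂ) (x : H), Dfun (c • x) = c • Dfun x := by
    intro c x
    refine (hDuniq (c • x) _ (Submodule.smul_mem _ c (hDmem x)) ?_).symm
    rw [map_smul, hDA, map_smul]
  let D₀ : H →ₗ[ℂ] H :=
    { toFun := Dfun, map_add' := hadd, map_smul' := hsmul }
  have hcont : Continuous D₀ := by
    apply LinearMap.continuous_of_seq_closed_graph
    intro u x y hu hDu
    have hyK : y ∈ (LinearMap.ker (A : H →ₗ[ℂ] H))ᗮ := by
      have hclosed : IsClosed ((LinearMap.ker (A : H →ₗ[ℂ] H))ᗮ : Set H) := Submodule.isClosed_orthogonal _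
      exact hclosed.mem_of_tendsto hDu (Filter.Eventually.of_forall fun n => hDmem (u n))
    have hAy : A y = B x := by
      have h1 : Filter.Tendsto (fun n => A (D₀ (u n))) Filter.atTop (nhds (A y)) :=
        (A.continuous.tendsto y).comp hDu
      have h2 : Filter.Tendsto (fun n => B (u n)) Filter.atTop (nhds (B x)) :=
        (B.continuous.tendsto x).comp hu
      have heq : (fun n => A (D₀ (u n))) = fun n => B (u n) := by
        funext n; exact hDA (u n)
      rw [heq] at h1
      exact tendsto_nhds_unique h1 h2
    exact hDuniq x y hyK hAy
  let D : H →L[ℂ] H := ⟨D₀, hcont⟩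
  have hAD : A ∘L D = B := by ext x; exact hDA x
  have hB' : B = ContinuousLinearMap.adjoint D ∘L A := by
    have := congrArg ContinuousLinearMap.adjoint hAD
    rw [ContinuousLinearMap.adjoint_comp, hA.adjoint_eq] at this
    rw [← hB.adjoint_eq, ← this]
  refine ⟨‖ContinuousLinearMap.adjoint D‖, fun x => ?_⟩
  calc ‖B x‖ = ‖ContinuousLinearMap.adjoint D (A x)‖ := by rw [hB']; rfl
    _ ≤ ‖ContinuousLinearMap.adjoint D‖ * ‖A x‖ :=
      (ContinuousLinearMap.adjoint D).le_opNorm (A x)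

set_option maxHeartbeats 1000000 in
/-- Let `T` be a bounded operator on a complex Hilbert space `H`, let `R = |T|` be the
positive square root of `T*T`, and suppose that for some real `α` with `0 < α < 1` one has
`R(T) = R(|T|) = R(|T|^α)`, where `|T|^α = cfc (t ↦ t^α) |T|` is given by the continuous
functional calculus.  Then `T` is EP: `R(T)` is closed and `R(T) = R(T*)`. -/
theorem stmt11 (T R : H →L[ℂ] H) (α : ℝ) (hα0 : 0 < α) (hα1 : α < 1)
    (hRpos : R.IsPositive)
    (hRsq : R ∘L R = ContinuousLinearMap.adjoint T ∘L T)
    (h1 : LinearMap.range (T : H →ₗ[ℂ] H) = LinearMap.range (R : H →ₗ[ℂ] H))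
    (h2 : LinearMap.range (R : H →ₗ[ℂ] H) = LinearMap.range ((cfc (fun t : ℝ => t ^ α) R : H →L[ℂ] H) : H →ₗ[ℂ] H)) :
    IsClosed ((LinearMap.range (T : H →ₗ[ℂ] H) : Submodule ℂ H) : Set H) ∧
      LinearMap.range (T : H →ₗ[ℂ] H) = LinearMap.range ((ContinuousLinearMap.adjoint T : H →L[ℂ] H) : H →ₗ[ℂ] H) := by
  have hRsa : IsSelfAdjoint R := hRpos.isSelfAdjoint
  set B : H →L[ℂ] H := cfc (fun t : ℝ => t ^ α) R with hBdef
  have hBsa : IsSelfAdjoint B := cfc_predicate _ R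
  have hαcont : Continuous (fun t : ℝ => t ^ α) := Real.continuous_rpow_const hα0.le
  -- Douglas bound
  obtain ⟨c, hc⟩ := aux_douglas_bound hRsa hBsa h2.ge
  set c' : ℝ := max c 1 with hc'def
  have hc'pos : (0:ℝ) < c' := lt_of_lt_of_le one_pos (le_max_right c 1)
  have hbound : ∀ x, ‖B x‖ ≤ c' * ‖R x‖ := fun x =>
    (hc x).trans (mul_le_mul_of_nonneg_right (le_max_left c 1) (norm_nonneg _))
  -- spectrum of R is nonnegative
  have hRnn : (0 : H →L[ℂ] H) ≤ R := (ContinuousLinearMap.nonneg_iff_isPositive R).mpr hRpos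
  have hspec_nn : ∀ t ∈ spectrum ℝ R, 0 ≤ t := fun t ht => spectrum_nonneg_of_nonneg hRnn ht
  -- the operator c'^2 • R² - B² is positive, hence q ≥ 0 on the spectrum
  set q : ℝ → ℝ := fun t => c' ^ 2 * (t * t) - t ^ α * t ^ α with hqdef
  have hqcont : Continuous q := by
    apply Continuous.sub
    · exact continuous_const.mul (continuous_id.mul continuous_id)
    · exact hαcont.mul hαcont
  have inner_sq : ∀ (S : H →L[ℂ] H), IsSelfAdjoint S → ∀ x : H,
      RCLike.re (inner ℂ (S (S x)) x : ℂ) = ‖S x‖ ^ 2 := by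
    intro S hS x
    have h := ContinuousLinearMap.adjoint_inner_left S x (S x)
    rw [hS.adjoint_eq] at h
    rw [h]
    exact inner_self_eq_norm_sq (𝕜 := ℂ) (S x)
  have hcfcq : cfc q R = c' ^ 2 • (R * R) - B * B := by
    rw [hqdef]
    rw [cfc_sub (fun t : ℝ => c' ^ 2 * (t * t)) (fun t : ℝ => t ^ α * t ^ α) R
      (continuous_const.mul (continuous_id.mul continuous_id)).continuousOn
      (hαcont.mul hαcont).continuousOn]
    congr 1
    · rw [cfc_const_mul (c' ^ 2) (fun t : ℝ => t * t) R
        (continuous_id.mul continuous_id).continuousOn]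
      congr 1
      rw [cfc_mul (fun t : ℝ => t) (fun t : ℝ => t) R
        continuous_id.continuousOn continuous_id.continuousOn, cfc_id' ℝ R]
    · rw [cfc_mul (fun t : ℝ => t ^ α) (fun t : ℝ => t ^ α) R
        hαcont.continuousOn hαcont.continuousOn]
  have hq_pos : (0 : H →L[ℂ] H) ≤ cfc q R := by
    rw [ContinuousLinearMap.nonneg_iff_isPositive]
    refine ContinuousLinearMap.isPositive_def'.mpr ⟨cfc_predicate q R, fun x => ?_⟩
    rw [ContinuousLinearMap.reApplyInnerSelf_apply, hcfcq]
    have e1 : ((c' ^ 2 • (R * R) - B * B) x) =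
        (c' ^ 2 : ℝ) • R (R x) - B (B x) := by
      simp [ContinuousLinearMap.sub_apply, ContinuousLinearMap.smul_apply,
        ContinuousLinearMap.mul_apply]
    have hBR : ‖B x‖ ^ 2 ≤ c' ^ 2 * ‖R x‖ ^ 2 := by
      have := mul_le_mul (hbound x) (hbound x) (norm_nonneg _)
        (mul_nonneg hc'pos.le (norm_nonneg _))
      nlinarith [norm_nonneg (B x), norm_nonneg (R x)]
    rw [e1, inner_sub_left, map_sub, RCLike.real_smul_eq_coe_smul (K := ℂ),
      inner_smul_real_left, RCLike.smul_re, inner_sq R hRsa, inner_sq B hBsa]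
    linarith
  have hq_spec : ∀ t ∈ spectrum ℝ R, 0 ≤ q t := by
    intro t ht
    have hmem : q t ∈ spectrum ℝ (cfc q R) := by
      rw [cfc_map_spectrum (R := ℝ) (f := q) (a := R) hRsa hqcont.continuousOn]
      exact Set.mem_image_of_mem q ht
    exact spectrum_nonneg_of_nonneg hq_pos hmem
  -- spectral gap
  set s : ℝ := 2 - 2 * α with hsdef
  have hs_pos : 0 < s := by rw [hsdef]; linarith
  set ε : ℝ := ((c' ^ 2)⁻¹) ^ s⁻¹ with hεdef
  have hε_pos : 0 < ε := Real.rpow_pos_of_pos (inv_pos.mpr (pow_pos hc'pos 2)) _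
  have hεs : ε ^ s = (c' ^ 2)⁻¹ := by
    rw [hεdef, ← Real.rpow_mul (inv_nonneg.mpr (pow_pos hc'pos 2).le),
      inv_mul_cancel₀ hs_pos.ne', Real.rpow_one]
  have hgap : ∀ t ∈ spectrum ℝ R, t = 0 ∨ ε ≤ t := by
    intro t ht
    rcases eq_or_lt_of_le (hspec_nn t ht) with h0 | htpos
    · exact Or.inl h0.symm
    right
    by_contra hlt
    push_neg at hlt
    have h1' : t ^ s < ε ^ s := Real.rpow_lt_rpow (hspec_nn t ht) hlt hs_pos
    rw [hεs] at h1'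
    have h2' : c' ^ 2 * t ^ s < 1 := by
      have hm := mul_lt_mul_of_pos_left h1' (pow_pos hc'pos 2)
      rwa [mul_inv_cancel₀ (pow_pos hc'pos 2).ne'] at hm
    have hA2 : t ^ α * t ^ α = t ^ (2 * α) := by
      rw [← Real.rpow_add htpos]; ring_nf
    have ht2 : t * t = t ^ (2:ℝ) := by
      rw [show (2:ℝ) = ((2:ℕ):ℝ) by norm_num, Real.rpow_natCast]; ring
    have hsplit : t ^ (2:ℝ) = t ^ s * t ^ (2 * α) := by
      rw [← Real.rpow_add htpos]; congr 1; rw [hsdef]; ring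
    have hqt := hq_spec t ht
    rw [hqdef] at hqt
    simp only at hqt
    rw [hA2, ht2, hsplit] at hqt
    have htpow : 0 < t ^ (2 * α) := Real.rpow_pos_of_pos htpos _
    nlinarith [Real.rpow_pos_of_pos htpos s]
  -- the spectral projection P
  set f : ℝ → ℝ := fun t => t / (max t ε) ^ 2 with hfdef
  have hmax_pos : ∀ t : ℝ, (0:ℝ) < max t ε := fun t => lt_of_lt_of_le hε_pos (le_max_right t ε)
  have hfcont : Continuous f := by
    apply Continuous.div continuous_id ((continuous_id.max continuous_const).pow 2)
    intro t
    exact ne_of_gt (pow_pos (hmax_pos t) 2)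
  set g : ℝ → ℝ := fun t => t * f t with hgdef
  have hgcont : Continuous g := continuous_id.mul hfcont
  have hg_vals : ∀ t ∈ spectrum ℝ R, g t = 0 ∨ g t = 1 := by
    intro t ht
    rcases hgap t ht with h0 | hge
    · left; rw [hgdef]; simp [h0, hfdef]
    · right
      have htpos : 0 < t := lt_of_lt_of_le hε_pos hge
      have ht0 : t ≠ 0 := ne_of_gt htpos
      rw [hgdef, hfdef]
      simp only [max_eq_left hge]
      field_simp
  have hgt_id : ∀ t ∈ spectrum ℝ R, t * g t = t := by
    intro t ht
    rcases hgap t ht with h0 | hge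
    · rw [h0]; ring
    · have htpos : 0 < t := lt_of_lt_of_le hε_pos hge
      have ht0 : t ≠ 0 := ne_of_gt htpos
      rw [hgdef, hfdef]
      simp only [max_eq_left hge]
      field_simp
  set P : H →L[ℂ] H := cfc g R with hPdef
  have hPsa : IsSelfAdjoint P := cfc_predicate g R
  have hPP : P * P = P := by
    rw [hPdef, ← cfc_mul g g R hgcont.continuousOn hgcont.continuousOn]
    apply cfc_congr
    intro t ht
    rcases hg_vals t ht with h | h <;> simp only [h] <;> norm_num
  have hPR : P * R = R := by
    rw [hPdef]
    calc cfc g R * R = cfc g R * cfc (fun t : ℝ => t) R := by rw [cfc_id' ℝ R]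
      _ = cfc (fun t => g t * t) R :=
        (cfc_mul g (fun t : ℝ => t) R hgcont.continuousOn continuous_id.continuousOn).symm
      _ = cfc (fun t : ℝ => t) R := cfc_congr (fun t ht => by rw [mul_comm]; exact hgt_id t ht)
      _ = R := cfc_id' ℝ R
  have hRfP : R * cfc f R = P := by
    rw [hPdef]
    calc R * cfc f R = cfc (fun t : ℝ => t) R * cfc f R := by rw [cfc_id' ℝ R]
      _ = cfc (fun t => t * f t) R :=
        (cfc_mul (fun t : ℝ => t) f R continuous_id.continuousOn hfcont.continuousOn).symm
      _ = cfc g R := by rw [hgdef]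
  have hfRP : cfc f R * R = P := by
    rw [hPdef]
    calc cfc f R * R = cfc f R * cfc (fun t : ℝ => t) R := by rw [cfc_id' ℝ R]
      _ = cfc (fun t => f t * t) R :=
        (cfc_mul f (fun t : ℝ => t) R hfcont.continuousOn continuous_id.continuousOn).symm
      _ = cfc g R := by apply cfc_congr; intro t _; rw [hgdef]; simp [mul_comm]
  have hRP : R * P = R := by
    rw [hPdef]
    calc R * cfc g R = cfc (fun t : ℝ => t) R * cfc g R := by rw [cfc_id' ℝ R]
      _ = cfc (fun t => t * g t) R :=
        (cfc_mul (fun t : ℝ => t) g R continuous_id.continuousOn hgcont.continuousOn).symm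
      _ = cfc (fun t : ℝ => t) R := cfc_congr hgt_id
      _ = R := cfc_id' ℝ R
  have hRRf : (R * R) * cfc f R = R := by
    rw [mul_assoc, hRfP, hRP]
  -- range equalities
  have hrangePR : LinearMap.range (P : H →ₗ[ℂ] H) = LinearMap.range (R : H →ₗ[ℂ] H) := by
    apply le_antisymm
    · rintro _ ⟨x, rfl⟩
      refine ⟨cfc f R x, ?_⟩
      have := congrFun (congrArg (fun (S : H →L[ℂ] H) => (S : H → H)) hRfP) x
      simpa [ContinuousLinearMap.mul_apply] using this
    · rintro _ ⟨x, rfl⟩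
      refine ⟨R x, ?_⟩
      have := congrFun (congrArg (fun (S : H →L[ℂ] H) => (S : H → H)) hPR) x
      simpa [ContinuousLinearMap.mul_apply] using this
  have hrangeP_closed : IsClosed ((LinearMap.range (P : H →ₗ[ℂ] H) : Submodule ℂ H) : Set H) := by
    have hset : ((LinearMap.range (P : H →ₗ[ℂ] H) : Submodule ℂ H) : Set H) = {x | P x = x} := by
      ext y
      constructor
      · rintro ⟨x, rfl⟩
        have := congrFun (congrArg (fun (S : H →L[ℂ] H) => (S : H → H)) hPP) x
        simpa [ContinuousLinearMap.mul_apply] using this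
      · intro hy
        exact ⟨y, hy⟩
    rw [hset]
    exact isClosed_eq P.continuous continuous_id
  -- kernel equalities
  have hinner_TR : ∀ x : H, (inner ℂ (T x) (T x) : ℂ) = inner ℂ (R x) (R x) := by
    intro x
    have e1 : (inner ℂ ((ContinuousLinearMap.adjoint T ∘L T) x) x : ℂ) = inner ℂ (T x) (T x) := by
      rw [ContinuousLinearMap.comp_apply, ContinuousLinearMap.adjoint_inner_left]
    have e2 : (inner ℂ ((R ∘L R) x) x : ℂ) = inner ℂ (R x) (R x) := by
      rw [ContinuousLinearMap.comp_apply]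
      have h := ContinuousLinearMap.adjoint_inner_left R x (R x)
      rw [hRsa.adjoint_eq] at h
      exact h
    rw [← e1, ← e2, hRsq]
  have hkerTR : LinearMap.ker (T : H →ₗ[ℂ] H) = LinearMap.ker (R : H →ₗ[ℂ] H) := by
    ext x
    simp only [LinearMap.mem_ker, ContinuousLinearMap.coe_coe]
    rw [← inner_self_eq_zero (𝕜 := ℂ) (x := T x), ← inner_self_eq_zero (𝕜 := ℂ) (x := R x),
      hinner_TR]
  have hkerRP : LinearMap.ker (R : H →ₗ[ℂ] H) = LinearMap.ker (P : H →ₗ[ℂ] H) := by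
    ext x
    simp only [LinearMap.mem_ker, ContinuousLinearMap.coe_coe]
    constructor
    · intro hx
      have := congrFun (congrArg (fun (S : H →L[ℂ] H) => (S : H → H)) hfRP) x
      simp only [ContinuousLinearMap.mul_apply] at this
      rw [← this, hx, map_zero]
    · intro hx
      have := congrFun (congrArg (fun (S : H →L[ℂ] H) => (S : H → H)) hRP) x
      simp only [ContinuousLinearMap.mul_apply] at this
      rw [← this, hx, map_zero]
  -- orthogonal complement of ker P is range P
  have horth : ((LinearMap.ker (P : H →ₗ[ℂ] H))ᗮ : Submodule ℂ H) ≤ LinearMap.range (P : H →ₗ[ℂ] H) := by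
    intro x hx
    have hu_ker : x - P x ∈ LinearMap.ker (P : H →ₗ[ℂ] H) := by
      simp only [LinearMap.mem_ker, ContinuousLinearMap.coe_coe, map_sub]
      have := congrFun (congrArg (fun (S : H →L[ℂ] H) => (S : H → H)) hPP) x
      simp only [ContinuousLinearMap.mul_apply] at this
      rw [this, sub_self]
    have h1' : (inner ℂ (x - P x) x : ℂ) = 0 :=
      (Submodule.mem_orthogonal _ x).mp hx _ hu_ker
    have hPu : P (x - P x) = 0 := hu_ker
    have h2' : (inner ℂ (x - P x) (P x) : ℂ) = 0 := by
      have hh := ContinuousLinearMap.adjoint_inner_right P (x - P x) x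
      rw [hPsa.adjoint_eq] at hh
      rw [hh, hPu, inner_zero_left]
    have h3' : (inner ℂ (x - P x) (x - P x) : ℂ) = 0 := by
      rw [inner_sub_right, h1', h2', sub_zero]
    have := inner_self_eq_zero.mp h3'
    refine ⟨x, ?_⟩
    have : x - P x = 0 := this
    simp only [sub_eq_zero] at this
    exact this.symm
  -- range T* ⊆ range R
  have hadj_le : LinearMap.range ((ContinuousLinearMap.adjoint T : H →L[ℂ] H) : H →ₗ[ℂ] H) ≤ LinearMap.range (R : H →ₗ[ℂ] H) := by
    have step1 : LinearMap.range ((ContinuousLinearMap.adjoint T : H →L[ℂ] H) : H →ₗ[ℂ] H) ≤ (LinearMap.ker (T : H →ₗ[ℂ] H))ᗮ := by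
      rintro _ ⟨z, rfl⟩
      rw [Submodule.mem_orthogonal]
      intro u hu
      have hu' : T u = 0 := hu
      rw [ContinuousLinearMap.coe_coe, ContinuousLinearMap.adjoint_inner_right, hu', inner_zero_left]
    calc LinearMap.range ((ContinuousLinearMap.adjoint T : H →L[ℂ] H) : H →ₗ[ℂ] H) ≤ (LinearMap.ker (T : H →ₗ[ℂ] H))ᗮ := step1
      _ = (LinearMap.ker (P : H →ₗ[ℂ] H))ᗮ := by rw [hkerTR, hkerRP]
      _ ≤ LinearMap.range (P : H →ₗ[ℂ] H) := horth
      _ = LinearMap.range (R : H →ₗ[ℂ] H) := hrangePR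
  -- range R ⊆ range T*
  have hadj_ge : LinearMap.range (R : H →ₗ[ℂ] H) ≤ LinearMap.range ((ContinuousLinearMap.adjoint T : H →L[ℂ] H) : H →ₗ[ℂ] H) := by
    rintro _ ⟨x, rfl⟩
    have := congrFun (congrArg (fun (S : H →L[ℂ] H) => (S : H → H)) hRRf) x
    simp only [ContinuousLinearMap.mul_apply] at this
    have hcomp : R x = (R ∘L R) (cfc f R x) := by
      rw [ContinuousLinearMap.comp_apply]; exact this.symm
    rw [ContinuousLinearMap.coe_coe, hcomp, hRsq]
    exact ⟨T (cfc f R x), rfl⟩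
  constructor
  · rw [h1, ← hrangePR]
    exact hrangeP_closed
  · rw [h1]
    exact (le_antisymm hadj_le hadj_ge).symm
end

section
/- Let T be a bounded EP operator on a complex Hilbert space H. Then γ(T) ≤ r(T), where γ(T) = inf{ ‖Tx‖ : x ∈ (ker T)ᗮ, ‖x‖ = 1 } is the reduced minimum modulus of T and r(T) = sup{ |λ| : λ ∈ spectrum of T } is the spectral radius of T. -/
variable {H : Type*} [NormedAddCommGroup H] [InnerProductSpace ℂ H] [CompleteSpace H]

/-- The reduced minimum modulus of a bounded operator:
`γ(T) = inf { ‖Tx‖ : x ∈ (ker T)ᗮ, ‖x‖ = 1 }`. -/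
noncomputable def redMinModulus (T : H →L[ℂ] H) : ℝ :=
  sInf ((fun x => ‖T x‖) '' {x : H | x ∈ (LinearMap.ker (T : H →ₗ[ℂ] H) : Submodule ℂ H)ᗮ ∧ ‖x‖ = 1})

/-- Let `T` be a bounded EP operator on a complex Hilbert space `H` (closed range and
`R(T) = R(T*)`).  Then `γ(T) ≤ r(T)`, where `γ(T)` is the reduced minimum modulus and
`r(T)` is the spectral radius of `T`. -/
theorem stmt17 (T : H →L[ℂ] H)
    (hrange : IsClosed ((LinearMap.range (T : H →ₗ[ℂ] H) : Submodule ℂ H) : Set H))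
    (hEP : LinearMap.range (T : H →ₗ[ℂ] H) = LinearMap.range ((ContinuousLinearMap.adjoint T : H →L[ℂ] H) : H →ₗ[ℂ] H)) :
    ENNReal.ofReal (redMinModulus T) ≤ spectralRadius ℂ T := by
  set S : Set H := {x : H | x ∈ (LinearMap.ker (T : H →ₗ[ℂ] H) : Submodule ℂ H)ᗮ ∧ ‖x‖ = 1} with hS
  by_cases hx : ∃ x : H, x ∈ S
  swap
  · have hempty : S = ∅ := Set.eq_empty_iff_forall_notMem.2 fun x hx' => hx ⟨x, hx'⟩
    simp [redMinModulus, ← hS, hempty, Real.sInf_empty]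
  -- ker T = (range T)ᗮ
  have hker : (LinearMap.ker (T : H →ₗ[ℂ] H) : Submodule ℂ H) = (LinearMap.range (T : H →ₗ[ℂ] H))ᗮ := by
    rw [hEP]
    ext x
    rw [LinearMap.mem_ker, Submodule.mem_orthogonal]
    constructor
    · rintro hx0 u ⟨z, rfl⟩
      simp only [ContinuousLinearMap.coe_coe] at hx0 ⊢
      rw [ContinuousLinearMap.adjoint_inner_left, hx0, inner_zero_right]
    · intro h
      have := h (ContinuousLinearMap.adjoint T (T x)) ⟨T x, rfl⟩
      rw [ContinuousLinearMap.adjoint_inner_left] at this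
      exact inner_self_eq_zero.mp this
  -- (ker T)ᗮ = range T
  have horth : ((LinearMap.ker (T : H →ₗ[ℂ] H) : Submodule ℂ H)ᗮ : Submodule ℂ H)
      = LinearMap.range (T : H →ₗ[ℂ] H) := by
    rw [hker, Submodule.orthogonal_orthogonal_eq_closure]
    exact SetLike.ext' (by rw [Submodule.topologicalClosure_coe, hrange.closure_eq])
  set γ := redMinModulus T with hγ
  have hbdd : BddBelow ((fun x => ‖T x‖) '' S) :=
    ⟨0, fun y ⟨x, _, hxy⟩ => hxy ▸ norm_nonneg _⟩
  have hγ0 : 0 ≤ γ :=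
    Real.sInf_nonneg (fun y ⟨x, _, hxy⟩ => hxy ▸ norm_nonneg _)
  have hγle : ∀ x : H, x ∈ LinearMap.range (T : H →ₗ[ℂ] H) → ‖x‖ = 1 → γ ≤ ‖T x‖ := by
    intro x hxr hx1
    exact csInf_le hbdd ⟨x, ⟨horth ▸ hxr, hx1⟩, rfl⟩
  have hlow : ∀ x : H, x ∈ LinearMap.range (T : H →ₗ[ℂ] H) → γ * ‖x‖ ≤ ‖T x‖ := by
    intro x hxr
    rcases eq_or_ne x 0 with rfl | hx0
    · simp
    · have hn : ‖x‖ ≠ 0 := norm_ne_zero_iff.mpr hx0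
      have hy : ((‖x‖⁻¹ : ℝ) : ℂ) • x ∈ LinearMap.range (T : H →ₗ[ℂ] H) :=
        Submodule.smul_mem _ _ hxr
      have hy1 : ‖((‖x‖⁻¹ : ℝ) : ℂ) • x‖ = 1 := by
        rw [norm_smul]
        simp [norm_inv, inv_mul_cancel₀ hn]
      have := hγle _ hy hy1
      rw [map_smul, norm_smul] at this
      simp only [Complex.norm_real, norm_inv, Real.norm_eq_abs, abs_of_nonneg (norm_nonneg x)]
        at this
      rw [mul_comm γ ‖x‖]
      calc ‖x‖ * γ ≤ ‖x‖ * (‖x‖⁻¹ * ‖T x‖) :=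
            mul_le_mul_of_nonneg_left this (norm_nonneg x)
        _ = ‖T x‖ := by field_simp
  obtain ⟨x₀, hx₀m, hx₀n⟩ := hx
  have hx₀r : x₀ ∈ LinearMap.range (T : H →ₗ[ℂ] H) := horth ▸ hx₀m
  -- powers are bounded below
  have hpow : ∀ n : ℕ, (T ^ n) x₀ ∈ LinearMap.range (T : H →ₗ[ℂ] H) ∧ γ ^ n ≤ ‖(T ^ n) x₀‖ := by
    intro n
    induction n with
    | zero => simpa [hx₀n] using hx₀r
    | succ n ih =>
      have happ : (T ^ (n + 1)) x₀ = T ((T ^ n) x₀) := by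
        rw [pow_succ']; rfl
      constructor
      · rw [happ]; exact ⟨_, rfl⟩
      · rw [happ, pow_succ']
        calc γ * γ ^ n ≤ γ * ‖(T ^ n) x₀‖ :=
              mul_le_mul_of_nonneg_left ih.2 hγ0
          _ ≤ γ * ‖(T ^ n) x₀‖ := le_rfl
          _ ≤ ‖T ((T ^ n) x₀)‖ := by
              have := hlow _ ih.1
              nlinarith [ih.1, hlow ((T ^ n) x₀) ih.1]
  have hnorm : ∀ n : ℕ, γ ^ n ≤ ‖T ^ n‖ := by
    intro n
    calc γ ^ n ≤ ‖(T ^ n) x₀‖ := (hpow n).2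
      _ ≤ ‖T ^ n‖ * ‖x₀‖ := (T ^ n).le_opNorm x₀
      _ = ‖T ^ n‖ := by rw [hx₀n, mul_one]
  -- Gelfand's formula
  have hg := spectrum.pow_nnnorm_pow_one_div_tendsto_nhds_spectralRadius T
  refine ge_of_tendsto hg ?_
  filter_upwards [Filter.eventually_ge_atTop 1] with n hn
  have hn' : (n : ℝ) ≠ 0 := Nat.cast_ne_zero.mpr (by omega)
  have h1 : ENNReal.ofReal γ = ((ENNReal.ofReal γ) ^ (n : ℝ)) ^ (1 / (n : ℝ)) := by
    rw [← ENNReal.rpow_mul]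
    rw [mul_one_div, div_self hn', ENNReal.rpow_one]
  rw [h1]
  refine ENNReal.rpow_le_rpow ?_ (by positivity)
  rw [ENNReal.rpow_natCast, ← ENNReal.ofReal_pow hγ0]
  calc ENNReal.ofReal (γ ^ n) ≤ ENNReal.ofReal ‖T ^ n‖ :=
        ENNReal.ofReal_le_ofReal (hnorm n)
    _ = (‖T ^ n‖₊ : ENNReal) := ofReal_norm _
end
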